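/- arXiv:2503.23340 — 8 statements merged into one kernel-verified Lean document; each statement's English description precedes it below -/
import Mathlib

section
/- Let U be a finite set, k ∈ ℕ, and let F_1, …, F_k : 2^U → ℝ each be monotonically non-increasing and supermodular. Then the function F : (k+1)^U → ℝ defined by F(𝐒) = F(S_1,…,S_k) = Σ_{i=1}^k F_i(S_i) is k-supermodular. -/
/-- A `k`-tuple of subsets is pairwise disjoint (i.e. it is an element of `(k+1)^U`). -/
def PwDisj {α : Type*} {k : ℕ} (S : Fin k → Finset α) : Prop :=
  ∀ i j : Fin k, i ≠ j → Disjoint (S i) (S j)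

/-- The meet `𝐒 ⊓ 𝐓`, with `i`-th component `S i ∩ T i`. -/
def kInf {α : Type*} [DecidableEq α] {k : ℕ} (S T : Fin k → Finset α) :
    Fin k → Finset α := fun i => S i ∩ T i

/-- The join `𝐒 ⊔ 𝐓`, with `i`-th component `(S i ∪ T i) \ ∪_{j ≠ i} (S j ∪ T j)`. -/
def kSup {α : Type*} [DecidableEq α] {k : ℕ} (S T : Fin k → Finset α) :
    Fin k → Finset α :=
  fun i => (S i ∪ T i) \ ((Finset.univ.erase i).biUnion fun j => S j ∪ T j)

/-- If `F_1, …, F_k : 2^U → ℝ` are monotonically non-increasing and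
supermodular, then `F(𝐒) = Σ_{i=1}^k F_i (S_i)` is `k`-supermodular on `(k+1)^U`. -/
theorem sum_of_antitone_supermodular_is_k_supermodular
    {α : Type*} [Fintype α] [DecidableEq α] {k : ℕ}
    (F : Fin k → Finset α → ℝ)
    (hmono : ∀ i : Fin k, ∀ S T : Finset α, S ⊆ T → F i T ≤ F i S)
    (hsuper : ∀ i : Fin k, ∀ S T : Finset α,
      F i S + F i T ≤ F i (S ∩ T) + F i (S ∪ T)) :
    ∀ S T : Fin k → Finset α, PwDisj S → PwDisj T →
      (∑ i, F i (S i)) + (∑ i, F i (T i)) ≤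
        (∑ i, F i (kInf S T i)) + (∑ i, F i (kSup S T i)) := by
  intro S T _ _
  rw [← Finset.sum_add_distrib, ← Finset.sum_add_distrib]
  refine Finset.sum_le_sum fun i _ => ?_
  calc F i (S i) + F i (T i) ≤ F i (S i ∩ T i) + F i (S i ∪ T i) := hsuper i _ _
    _ ≤ F i (kInf S T i) + F i (kSup S T i) := by
        refine add_le_add (le_of_eq rfl) (hmono i _ _ ?_)
        exact Finset.sdiff_subset
end

section
/- Let U be a finite set, k ∈ ℕ, and let G_1, …, G_k : 2^U → ℝ each be monotonically non-decreasing and submodular. Then the function G : (k+1)^U → ℝ defined by G(𝐒) = G(S_1,…,S_k) = Σ_{i=1}^k G_i(S_i) is k-submodular. -/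
/-- If `G_1, …, G_k : 2^U → ℝ` are monotonically non-decreasing and
submodular, then `G(𝐒) = Σ_{i=1}^k G_i (S_i)` is `k`-submodular on `(k+1)^U`. -/
theorem sum_of_monotone_submodular_is_k_submodular
    {α : Type*} [Fintype α] [DecidableEq α] {k : ℕ}
    (G : Fin k → Finset α → ℝ)
    (hmono : ∀ i : Fin k, ∀ S T : Finset α, S ⊆ T → G i S ≤ G i T)
    (hsub : ∀ i : Fin k, ∀ S T : Finset α,
      G i (S ∩ T) + G i (S ∪ T) ≤ G i S + G i T) :
    ∀ S T : Fin k → Finset α, PwDisj S → PwDisj T →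
      (∑ i, G i (kInf S T i)) + (∑ i, G i (kSup S T i)) ≤
        (∑ i, G i (S i)) + (∑ i, G i (T i)) := by
  intro S T _ _
  rw [← Finset.sum_add_distrib, ← Finset.sum_add_distrib]
  apply Finset.sum_le_sum
  intro i _
  calc G i (kInf S T i) + G i (kSup S T i)
      ≤ G i (S i ∩ T i) + G i (S i ∪ T i) := by
        exact add_le_add le_rfl (hmono i _ _ (Finset.sdiff_subset))
    _ ≤ G i (S i) + G i (T i) := hsub i _ _
end

section
/- Let U be a finite set, k ∈ ℕ, let f : (k+1)^U → ℝ be orthant submodular, let β ∈ ℝ and 𝐕 = (V_1,…,V_k) ∈ (k+1)^U. Define g on {𝐒 ∈ (k+1)^U : 𝐒 ≼ 𝐕} by g(𝐒) = f(𝐒) − β + Σ_{i=1}^k Σ_{e∈S_i} ( f(V_1,…,V_i \ {e},…,V_k) − f(V_1,…,V_i,…,V_k) ). Then g is k-submodular and monotonically non-decreasing (on tuples 𝐒 ≼ 𝐕). -/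
/-- The transformed function
`g(𝐒) = f(𝐒) − β + Σ_{i} Σ_{e ∈ S_i} ( f(V_1,…,V_i \ {e},…,V_k) − f(𝐕) )`. -/
noncomputable def transformed {α : Type*} [DecidableEq α] {k : ℕ}
    (f : (Fin k → Finset α) → ℝ) (β : ℝ) (V : Fin k → Finset α)
    (S : Fin k → Finset α) : ℝ :=
  f S - β + ∑ i, ∑ e ∈ S i, (f (Function.update V i (V i \ {e})) - f V)

section Helpers

variable {α : Type*} [DecidableEq α] {k : ℕ}

lemma PwDisj.mono {S T : Fin k → Finset α} (hT : PwDisj T) (h : ∀ i, S i ⊆ T i) :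
    PwDisj S := fun i j hij => (hT i j hij).mono (h i) (h j)

lemma mem_kSup {S T : Fin k → Finset α} {i : Fin k} {x : α} :
    x ∈ kSup S T i ↔ (x ∈ S i ∨ x ∈ T i) ∧ ∀ j, j ≠ i → x ∉ S j ∧ x ∉ T j := by
  simp only [kSup, Finset.mem_sdiff, Finset.mem_union, Finset.mem_biUnion, Finset.mem_erase,
    Finset.mem_univ, and_true, not_exists, not_and, not_or]

lemma pwdisj_kSup (S T : Fin k → Finset α) : PwDisj (kSup S T) := by
  intro i j hij
  rw [Finset.disjoint_left]
  intro x hxi hxj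
  rcases (mem_kSup.mp hxi).1 with h | h
  · exact ((mem_kSup.mp hxj).2 i hij).1 h
  · exact ((mem_kSup.mp hxj).2 i hij).2 h


lemma erase_update_subset (S : Fin k → Finset α) (i : Fin k) (e : α) :
    ∀ l, Function.update S i ((S i).erase e) l ⊆ S l := by
  intro l
  rcases eq_or_ne l i with rfl | h
  · rw [Function.update_self]
    exact Finset.erase_subset _ _
  · rw [Function.update_of_ne h]

lemma kInf_erase {S T : Fin k → Finset α} {i : Fin k} {e : α} (heT : e ∉ T i) :
    kInf (Function.update S i ((S i).erase e)) T = kInf S T := by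
  funext l
  rcases eq_or_ne l i with rfl | h
  · show Function.update S l ((S l).erase e) l ∩ T l = S l ∩ T l
    rw [Function.update_self]
    ext x
    simp only [Finset.mem_inter, Finset.mem_erase]
    constructor
    · rintro ⟨⟨_, h1⟩, h2⟩
      exact ⟨h1, h2⟩
    · rintro ⟨h1, h2⟩
      exact ⟨⟨fun hx => heT (hx ▸ h2), h1⟩, h2⟩
  · show Function.update S i ((S i).erase e) l ∩ T l = S l ∩ T l
    rw [Function.update_of_ne h]

/-- generic: `A ≼ kSup A T` when no element of `A` sits in a "wrong" component of `T`. -/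
lemma subset_kSup_self {A T : Fin k → Finset α} (hA : PwDisj A) (hT : PwDisj T)
    (hcond : ∀ l x, x ∈ A l → x ∉ T l → ∀ m, x ∉ T m) :
    ∀ l, A l ⊆ kSup A T l := by
  intro l x hx
  refine mem_kSup.mpr ⟨Or.inl hx, fun m hm => ⟨fun hxm => ?_, fun hxm => ?_⟩⟩
  · exact (hA m l hm).forall_ne_finset hxm hx rfl
  · by_cases hxT : x ∈ T l
    · exact (hT m l hm).forall_ne_finset hxm hxT rfl
    · exact hcond l x hx hxT m hxm


lemma update_erase_insert {S : Fin k → Finset α} {i : Fin k} {e : α} (heS : e ∈ S i) :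
    Function.update (Function.update S i ((S i).erase e)) i
      (insert e (Function.update S i ((S i).erase e) i)) = S := by
  funext l
  rcases eq_or_ne l i with rfl | h
  · rw [Function.update_self, Function.update_self, Finset.insert_erase heS]
  · rw [Function.update_of_ne h, Function.update_of_ne h]

/-- Case (a): erasing an element of `S i \ T i` that lies in some `T j` only enlarges the join. -/
lemma kSup_subset_kSup_erase {S T : Fin k → Finset α} {i j : Fin k} {e : α}
    (hji : j ≠ i) (hej : e ∈ T j) :
    ∀ l, kSup S T l ⊆ kSup (Function.update S i ((S i).erase e)) T l := by
  intro l x hx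
  obtain ⟨hx1, hx2⟩ := mem_kSup.mp hx
  refine mem_kSup.mpr ⟨?_, fun m hm =>
    ⟨fun hxm => (hx2 m hm).1 (erase_update_subset S i e m hxm), (hx2 m hm).2⟩⟩
  rcases hx1 with h | h
  · rcases eq_or_ne l i with rfl | hl
    · left
      rw [Function.update_self, Finset.mem_erase]
      refine ⟨?_, h⟩
      rintro rfl
      exact (hx2 j hji).2 hej
    · left
      rw [Function.update_of_ne hl]
      exact h
  · right
    exact h

/-- Case (b): erasing an element of `S i` lying in no `T m` removes it from the join. -/
lemma kSup_erase_eq {S T : Fin k → Finset α} {i : Fin k} {e : α}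
    (hS : PwDisj S) (heS : e ∈ S i) (hb : ∀ m, e ∉ T m) :
    kSup S T = Function.update (kSup (Function.update S i ((S i).erase e)) T) i
      (insert e (kSup (Function.update S i ((S i).erase e)) T i)) := by
  have heS'm : ∀ m, e ∉ Function.update S i ((S i).erase e) m := by
    intro m
    rcases eq_or_ne m i with rfl | h
    · rw [Function.update_self]
      exact Finset.notMem_erase e _
    · rw [Function.update_of_ne h]
      exact fun hmem => (hS m i h).forall_ne_finset hmem heS rfl
  funext l
  rcases eq_or_ne l i with rfl | hl
  · rw [Function.update_self]
    ext x
    rw [Finset.mem_insert, mem_kSup, mem_kSup]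
    constructor
    · rintro ⟨h1, h2⟩
      rcases eq_or_ne x e with rfl | hxe
      · exact Or.inl rfl
      · refine Or.inr ⟨?_, fun m hm =>
          ⟨fun hxm => (h2 m hm).1 (erase_update_subset S l e m hxm), (h2 m hm).2⟩⟩
        rcases h1 with h | h
        · left
          rw [Function.update_self, Finset.mem_erase]
          exact ⟨hxe, h⟩
        · right
          exact h
    · rintro (rfl | ⟨h1, h2⟩)
      · refine ⟨Or.inl heS, fun m hm => ⟨?_, hb m⟩⟩
        exact fun hmem => (hS m l hm).forall_ne_finset hmem heS rfl
      · refine ⟨?_, fun m hm => ⟨fun hxm => ?_, (h2 m hm).2⟩⟩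
        · rcases h1 with h | h
          · exact Or.inl (erase_update_subset S l e l h)
          · exact Or.inr h
        · -- x ∈ S m, m ≠ l = i; but x ∉ S' m = S m
          have : Function.update S l ((S l).erase e) m = S m := Function.update_of_ne hm _ _
          exact (h2 m hm).1 (this ▸ hxm)
  · rw [Function.update_of_ne hl]
    ext x
    rw [mem_kSup, mem_kSup]
    have hSl : Function.update S i ((S i).erase e) l = S l := Function.update_of_ne hl _ _
    constructor
    · rintro ⟨h1, h2⟩
      refine ⟨by rwa [hSl], fun m hm =>
        ⟨fun hxm => (h2 m hm).1 (erase_update_subset S i e m hxm), (h2 m hm).2⟩⟩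
    · rintro ⟨h1, h2⟩
      rw [hSl] at h1
      refine ⟨h1, fun m hm => ⟨fun hxm => ?_, (h2 m hm).2⟩⟩
      -- x ∈ S m; show False
      rcases eq_or_ne m i with rfl | hmi
      · -- x ∈ S m = S i; if x ≠ e then x ∈ erase, contradiction; if x = e then e ∈ S l ∨ e ∈ T l, both impossible
        rcases eq_or_ne x e with rfl | hxe
        · rcases h1 with h | h
          · exact (hS l m hl).forall_ne_finset h hxm rfl
          · exact hb l h
        · exact (h2 m hm).1
            (by rw [Function.update_self]; exact Finset.mem_erase.mpr ⟨hxe, hxm⟩)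
      · exact (h2 m hm).1 (by rwa [Function.update_of_ne hmi])


variable [Fintype α]

lemma sum_card_erase_lt {S T : Fin k → Finset α} {i : Fin k} {e : α}
    (heS : e ∈ S i) (heT : e ∉ T i) :
    ∑ l, (Function.update S i ((S i).erase e) l \ T l).card < ∑ l, (S l \ T l).card := by
  apply Finset.sum_lt_sum
  · intro l _
    exact Finset.card_le_card
      (Finset.sdiff_subset_sdiff (erase_update_subset S i e l) le_rfl)
  · refine ⟨i, Finset.mem_univ i, Finset.card_lt_card ?_⟩
    rw [Function.update_self]
    refine (Finset.ssubset_iff_of_subset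
      (Finset.sdiff_subset_sdiff (Finset.erase_subset _ _) le_rfl)).mpr ?_
    exact ⟨e, Finset.mem_sdiff.mpr ⟨heS, heT⟩, by simp⟩


/-- rewriting the correction sum after updating one coordinate -/
lemma corr_sum_update (f : (Fin k → Finset α) → ℝ) (V : Fin k → Finset α)
    (X : Fin k → Finset α) (i : Fin k) (A : Finset α) :
    ∑ j, ∑ e ∈ Function.update X i A j, (f (Function.update V j (V j \ {e})) - f V)
      = ∑ j, ∑ e ∈ X j, (f (Function.update V j (V j \ {e})) - f V)
        + ((∑ e ∈ A, (f (Function.update V i (V i \ {e})) - f V))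
           - ∑ e ∈ X i, (f (Function.update V i (V i \ {e})) - f V)) := by
  have h2 : ∑ j, ((∑ e ∈ Function.update X i A j, (f (Function.update V j (V j \ {e})) - f V))
      - ∑ e ∈ X j, (f (Function.update V j (V j \ {e})) - f V))
      = (∑ e ∈ A, (f (Function.update V i (V i \ {e})) - f V))
        - ∑ e ∈ X i, (f (Function.update V i (V i \ {e})) - f V) := by
    rw [Finset.sum_eq_single i]
    · rw [Function.update_self]
    · intro b _ hb
      rw [Function.update_of_ne hb]
      ring
    · intro h
      exact absurd (Finset.mem_univ i) h
  rw [Finset.sum_sub_distrib] at h2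
  linarith

lemma transformed_update (f : (Fin k → Finset α) → ℝ) (β : ℝ) (V : Fin k → Finset α)
    (X : Fin k → Finset α) (i : Fin k) (e : α) (he : e ∉ X i) :
    transformed f β V (Function.update X i (insert e (X i))) =
      transformed f β V X + (f (Function.update X i (insert e (X i))) - f X)
        + (f (Function.update V i (V i \ {e})) - f V) := by
  unfold transformed
  rw [corr_sum_update f V X i (insert e (X i)), Finset.sum_insert he]
  ring

/-- orthant submodularity of the transformed function. -/
lemma transformed_orth (f : (Fin k → Finset α) → ℝ)
    (horth : ∀ S T : Fin k → Finset α, PwDisj S → PwDisj T →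
      (∀ i, S i ⊆ T i) → ∀ (i : Fin k) (e : α), e ∉ Finset.univ.biUnion T →
        f (Function.update T i (insert e (T i))) - f T ≤
          f (Function.update S i (insert e (S i))) - f S)
    (β : ℝ) (V : Fin k → Finset α) {X Y : Fin k → Finset α}
    (hX : PwDisj X) (hY : PwDisj Y) (hXY : ∀ i, X i ⊆ Y i)
    (i : Fin k) (e : α) (he : e ∉ Finset.univ.biUnion Y) :
    transformed f β V (Function.update Y i (insert e (Y i))) - transformed f β V Y ≤
      transformed f β V (Function.update X i (insert e (X i))) - transformed f β V X := by
  have heY : e ∉ Y i := fun h => he (Finset.mem_biUnion.mpr ⟨i, Finset.mem_univ i, h⟩)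
  have heX : e ∉ X i := fun h => heY (hXY i h)
  rw [transformed_update f β V X i e heX, transformed_update f β V Y i e heY]
  have := horth X Y hX hY hXY i e he
  linarith

/-- one monotone step: adding an element of `V i` does not decrease `g`. -/
lemma transformed_step (f : (Fin k → Finset α) → ℝ)
    (horth : ∀ S T : Fin k → Finset α, PwDisj S → PwDisj T →
      (∀ i, S i ⊆ T i) → ∀ (i : Fin k) (e : α), e ∉ Finset.univ.biUnion T →
        f (Function.update T i (insert e (T i))) - f T ≤
          f (Function.update S i (insert e (S i))) - f S)
    (β : ℝ) (V : Fin k → Finset α) (hV : PwDisj V) {X : Fin k → Finset α}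
    (hX : PwDisj X) (hXV : ∀ j, X j ⊆ V j) (i : Fin k) (e : α) (heV : e ∈ V i)
    (he : e ∉ Finset.univ.biUnion X) :
    transformed f β V X ≤ transformed f β V (Function.update X i (insert e (X i))) := by
  have heX : e ∉ X i := fun h => he (Finset.mem_biUnion.mpr ⟨i, Finset.mem_univ i, h⟩)
  set W := Function.update V i (V i \ {e}) with hW
  have hWsub : ∀ j, W j ⊆ V j := by
    intro j
    rcases eq_or_ne j i with rfl | h
    · rw [hW, Function.update_self]
      exact Finset.sdiff_subset
    · rw [hW, Function.update_of_ne h]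
  have hWd : PwDisj W := hV.mono hWsub
  have hXW : ∀ j, X j ⊆ W j := by
    intro j
    rcases eq_or_ne j i with rfl | h
    · rw [hW, Function.update_self, Finset.subset_sdiff]
      exact ⟨hXV j, by simpa using heX⟩
    · rw [hW, Function.update_of_ne h]
      exact hXV j
  have heW : e ∉ Finset.univ.biUnion W := by
    simp only [Finset.mem_biUnion, Finset.mem_univ, true_and, not_exists]
    intro j hj
    rcases eq_or_ne j i with rfl | h
    · rw [hW, Function.update_self] at hj
      simp at hj
    · rw [hW, Function.update_of_ne h] at hj
      exact (hV j i h).forall_ne_finset hj heV rfl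
  have key := horth X W hX hWd hXW i e heW
  have hWe : Function.update W i (insert e (W i)) = V := by
    funext j
    rcases eq_or_ne j i with rfl | h
    · rw [Function.update_self, hW, Function.update_self,
        Finset.sdiff_singleton_eq_erase, Finset.insert_erase heV]
    · rw [Function.update_of_ne h, hW, Function.update_of_ne h]
  rw [hWe] at key
  rw [transformed_update f β V X i e heX]
  have : f W = f (Function.update V i (V i \ {e})) := by rw [hW]
  linarith [key, this]

end Helpers

section Main

variable {α : Type*} [Fintype α] [DecidableEq α] {k : ℕ}

variable (f : (Fin k → Finset α) → ℝ)
  (horth : ∀ S T : Fin k → Finset α, PwDisj S → PwDisj T →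
    (∀ i, S i ⊆ T i) → ∀ (i : Fin k) (e : α), e ∉ Finset.univ.biUnion T →
      f (Function.update T i (insert e (T i))) - f T ≤
        f (Function.update S i (insert e (S i))) - f S)
  (β : ℝ) (V : Fin k → Finset α) (hV : PwDisj V)

include horth hV in
lemma transformed_mono_aux (T : Fin k → Finset α) (hT : PwDisj T) (hTV : ∀ i, T i ⊆ V i) :
    ∀ (n : ℕ) (S : Fin k → Finset α), PwDisj S → (∀ i, S i ⊆ T i) →
      (∑ i, (T i \ S i).card) ≤ n → transformed f β V S ≤ transformed f β V T := by
  intro n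
  induction n with
  | zero =>
    intro S _ hST hc
    have hS : S = T := by
      funext i
      have h1 : (T i \ S i).card ≤ ∑ j, (T j \ S j).card :=
        Finset.single_le_sum (f := fun j => (T j \ S j).card)
          (fun j _ => Nat.zero_le _) (Finset.mem_univ i)
      have h0 : T i \ S i = ∅ := Finset.card_eq_zero.mp (by omega)
      exact Finset.Subset.antisymm (hST i)
        (by rwa [← Finset.sdiff_eq_empty_iff_subset])
    rw [hS]
  | succ n ih =>
    intro S hS hST hc
    by_cases hb : S = T
    · rw [hb]
    · have : ∃ i, S i ≠ T i := by
        by_contra h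
        push_neg at h
        exact hb (funext h)
      obtain ⟨i, hi⟩ := this
      obtain ⟨e, heT, heS⟩ := Finset.exists_of_ssubset (lt_of_le_of_ne (hST i) hi)
      set S' := Function.update S i (insert e (S i)) with hS'
      have hS'T : ∀ j, S' j ⊆ T j := by
        intro j
        rcases eq_or_ne j i with rfl | h
        · rw [hS', Function.update_self]
          exact Finset.insert_subset heT (hST j)
        · rw [hS', Function.update_of_ne h]
          exact hST j
      have hS'd : PwDisj S' := hT.mono hS'T
      have heBU : e ∉ Finset.univ.biUnion S := by
        simp only [Finset.mem_biUnion, Finset.mem_univ, true_and, not_exists]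
        intro j hj
        rcases eq_or_ne j i with rfl | h
        · exact heS hj
        · exact (hT j i h).forall_ne_finset (hST j hj) heT rfl
      have step := transformed_step f horth β V hV hS (fun j => (hST j).trans (hTV j))
        i e (hTV i heT) heBU
      have hmeas : ∑ j, (T j \ S' j).card ≤ n := by
        have hlt : ∑ j, (T j \ S' j).card < ∑ j, (T j \ S j).card := by
          apply Finset.sum_lt_sum
          · intro j _
            apply Finset.card_le_card
            apply Finset.sdiff_subset_sdiff (le_refl _)
            rcases eq_or_ne j i with rfl | h
            · rw [hS', Function.update_self]
              exact Finset.subset_insert _ _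
            · rw [hS', Function.update_of_ne h]
          · refine ⟨i, Finset.mem_univ i, Finset.card_lt_card ?_⟩
            rw [hS', Function.update_self]
            refine (Finset.ssubset_iff_of_subset
              (Finset.sdiff_subset_sdiff le_rfl (Finset.subset_insert _ _))).mpr ?_
            exact ⟨e, Finset.mem_sdiff.mpr ⟨heT, heS⟩,
              by simp [Finset.mem_sdiff]⟩
        omega
      exact step.trans (ih S' hS'd hS'T hmeas)


include horth hV in
lemma transformed_submod_base (T : Fin k → Finset α) (hT : PwDisj T) (hTV : ∀ i, T i ⊆ V i)
    (S : Fin k → Finset α) (hS : PwDisj S) (hST : ∀ i, S i ⊆ T i) :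
    transformed f β V (kInf S T) + transformed f β V (kSup S T) ≤
      transformed f β V S + transformed f β V T := by
  have h1 : kInf S T = S := funext fun i => Finset.inter_eq_left.mpr (hST i)
  have h2 : ∀ i, kSup S T i ⊆ T i := by
    intro i x hx
    rcases (mem_kSup.mp hx).1 with h | h
    · exact hST i h
    · exact h
  have h3 := transformed_mono_aux f horth β V hV T hT hTV
    (∑ i, (T i \ kSup S T i).card) (kSup S T) (pwdisj_kSup S T) h2 le_rfl
  rw [h1]
  linarith

include horth hV in
lemma transformed_submod_aux (T : Fin k → Finset α) (hT : PwDisj T) (hTV : ∀ i, T i ⊆ V i) :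
    ∀ (n : ℕ) (S : Fin k → Finset α), PwDisj S → (∀ i, S i ⊆ V i) →
      (∑ i, (S i \ T i).card) ≤ n →
      transformed f β V (kInf S T) + transformed f β V (kSup S T) ≤
        transformed f β V S + transformed f β V T := by
  intro n
  induction n with
  | zero =>
    intro S hS hSV hc
    have hST : ∀ i, S i ⊆ T i := by
      intro i
      have h1 : (S i \ T i).card ≤ ∑ j, (S j \ T j).card :=
        Finset.single_le_sum (f := fun j => (S j \ T j).card)
          (fun j _ => Nat.zero_le _) (Finset.mem_univ i)
      have h0 : S i \ T i = ∅ := Finset.card_eq_zero.mp (by omega)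
      rwa [← Finset.sdiff_eq_empty_iff_subset]
    exact transformed_submod_base f horth β V hV T hT hTV S hS hST
  | succ n ih =>
    intro S hS hSV hc
    by_cases hbase : ∀ i, S i ⊆ T i
    · exact transformed_submod_base f horth β V hV T hT hTV S hS hbase
    by_cases ha : ∃ i e, e ∈ S i ∧ e ∉ T i ∧ ∃ j, e ∈ T j
    · -- Case (a)
      obtain ⟨i, e, heS, heT, j, hej⟩ := ha
      have hji : j ≠ i := fun h => heT (h ▸ hej)
      have hS'sub := erase_update_subset S i e
      have hS' : PwDisj (Function.update S i ((S i).erase e)) := hS.mono hS'sub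
      have hS'V : ∀ l, Function.update S i ((S i).erase e) l ⊆ V l :=
        fun l => (hS'sub l).trans (hSV l)
      have hinf := kInf_erase (S := S) heT
      have hsupsub := kSup_subset_kSup_erase (S := S) (T := T) hji hej
      have hsupV : ∀ l, kSup (Function.update S i ((S i).erase e)) T l ⊆ V l := by
        intro l x hx
        rcases (mem_kSup.mp hx).1 with h | h
        · exact hS'V l h
        · exact hTV l h
      have hm1 := transformed_mono_aux f horth β V hV
        (kSup (Function.update S i ((S i).erase e)) T)
        (pwdisj_kSup _ T) hsupV
        (∑ l, ((kSup (Function.update S i ((S i).erase e)) T) l \ (kSup S T) l).card)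
        (kSup S T) (pwdisj_kSup S T) hsupsub le_rfl
      have hm2 := transformed_mono_aux f horth β V hV S hS hSV
        (∑ l, (S l \ Function.update S i ((S i).erase e) l).card)
        (Function.update S i ((S i).erase e)) hS' hS'sub le_rfl
      have hmeas := sum_card_erase_lt (T := T) heS heT
      have hih := ih (Function.update S i ((S i).erase e)) hS' hS'V (by omega)
      rw [← hinf]
      linarith
    · -- Case (b)
      push_neg at hbase ha
      obtain ⟨i, hi⟩ := hbase
      obtain ⟨e, heS, heT⟩ := Finset.not_subset.mp hi
      have hb : ∀ m, e ∉ T m := ha i e heS heT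
      have hS'sub := erase_update_subset S i e
      have hS' : PwDisj (Function.update S i ((S i).erase e)) := hS.mono hS'sub
      have hS'V : ∀ l, Function.update S i ((S i).erase e) l ⊆ V l :=
        fun l => (hS'sub l).trans (hSV l)
      have hinf := kInf_erase (S := S) heT
      have hsup := kSup_erase_eq hS heS hb
      have hS'le : ∀ l, Function.update S i ((S i).erase e) l ⊆
          kSup (Function.update S i ((S i).erase e)) T l := by
        apply subset_kSup_self hS' hT
        intro l x hx hxT m
        exact ha l x (hS'sub l hx) hxT m
      have heBU : e ∉ Finset.univ.biUnion (kSup (Function.update S i ((S i).erase e)) T) := by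
        simp only [Finset.mem_biUnion, Finset.mem_univ, true_and, not_exists]
        intro m hm
        rcases (mem_kSup.mp hm).1 with h | h
        · rcases eq_or_ne m i with rfl | hmi
          · rw [Function.update_self] at h
            exact Finset.notMem_erase e _ h
          · rw [Function.update_of_ne hmi] at h
            exact (hS m i hmi).forall_ne_finset h heS rfl
        · exact hb m h
      have horthg := transformed_orth f horth β V hS'
        (pwdisj_kSup (Function.update S i ((S i).erase e)) T) hS'le i e heBU
      rw [update_erase_insert heS, ← hsup] at horthg
      have hmeas := sum_card_erase_lt (T := T) heS heT
      have hih := ih (Function.update S i ((S i).erase e)) hS' hS'V (by omega)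
      rw [← hinf]
      linarith

end Main

/-- If `f : (k+1)^U → ℝ` is orthant submodular, `β ∈ ℝ` and
`𝐕 ∈ (k+1)^U`, then the transformed function `g` is `k`-submodular and monotonically
non-decreasing on `{𝐒 : 𝐒 ≼ 𝐕}`. -/
theorem transformed_k_submodular_and_monotone
    {α : Type*} [Fintype α] [DecidableEq α] {k : ℕ}
    (f : (Fin k → Finset α) → ℝ)
    (horth : ∀ S T : Fin k → Finset α, PwDisj S → PwDisj T →
      (∀ i, S i ⊆ T i) → ∀ (i : Fin k) (e : α), e ∉ Finset.univ.biUnion T →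
        f (Function.update T i (insert e (T i))) - f T ≤
          f (Function.update S i (insert e (S i))) - f S)
    (β : ℝ) (V : Fin k → Finset α) (hV : PwDisj V) :
    (∀ S T : Fin k → Finset α, PwDisj S → PwDisj T →
        (∀ i, S i ⊆ V i) → (∀ i, T i ⊆ V i) →
        transformed f β V (kInf S T) + transformed f β V (kSup S T) ≤
          transformed f β V S + transformed f β V T) ∧
    (∀ S T : Fin k → Finset α, PwDisj S → PwDisj T →
        (∀ i, S i ⊆ T i) → (∀ i, T i ⊆ V i) →
        transformed f β V S ≤ transformed f β V T) := by
  constructor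
  · intro S T hS hT hSV hTV
    exact transformed_submod_aux f horth β V hV T hT hTV
      (∑ i, (S i \ T i).card) S hS hSV le_rfl
  · intro S T hS hT hST hTV
    exact transformed_mono_aux f horth β V hV T hT hTV
      (∑ i, (T i \ S i).card) S hS hST le_rfl
end

section
/- Let U be a finite set, k ∈ ℕ, m ≥ 1, let g : (k+1)^U → ℝ be monotonically non-decreasing and k-submodular with g(∅,…,∅) ≥ 0, and let c be a non-negative modular function with c(∅,…,∅) = 0, i.e. c(𝐒) = Σ_{i=1}^k Σ_{e∈S_i} c({e}) with each c({e}) ≥ 0. Fix 𝐕 ∈ (k+1)^U. Let (𝐒_i)_{i=0}^m be the iterates of the generalized distorted greedy algorithm: 𝐒_0 = (∅,…,∅); at step i ∈ {0,…,m−1}, pick (j*, e*) maximizing, over j ∈ ⟦k⟧ and e ∈ V_j \ S_{i,j}, the quantity (1 − 1/m)^{m−(i+1)} Δ_{e,j} g(𝐒_i) − c({e}); if this maximal quantity is > 0 set S_{i+1,j*} = S_{i,j*} ∪ {e*} and S_{i+1,l} = S_{i,l} for l ≠ j*, otherwise set 𝐒_{i+1} = 𝐒_i. Let OPT be a maximizer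 of g(𝐒) − c(𝐒) over {𝐒 ≼ 𝐕 : |supp(𝐒)| ≤ m}. Then g(𝐒_m) − c(𝐒_m) ≥ (1 − e^{−1}) g(OPT) − c(OPT). -/
/-- The value of the modular function determined by the singleton costs `c` on a tuple. -/
def cSet {α : Type*} {k : ℕ} (c : α → ℝ) (S : Fin k → Finset α) : ℝ :=
  ∑ i, ∑ e ∈ S i, c e

/-- The distorted marginal quantity
`(1 − 1/m)^{m−(i+1)} Δ_{e,j} g(𝐒) − c({e})` used by the generalized distorted greedy
algorithm at step `i`. -/
noncomputable def qGain {α : Type*} [DecidableEq α] {k : ℕ}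
    (g : (Fin k → Finset α) → ℝ) (c : α → ℝ) (m i : ℕ)
    (S : Fin k → Finset α) (j : Fin k) (e : α) : ℝ :=
  ((1 : ℝ) - 1 / (m : ℝ)) ^ (m - (i + 1)) *
      (g (Function.update S j (insert e (S j))) - g S) - c e

section Aux
variable {α : Type*} [DecidableEq α] {k : ℕ}

lemma pwdisj_of_le {V S : Fin k → Finset α} (hV : PwDisj V) (h : ∀ i, S i ⊆ V i) :
    PwDisj S := fun i j hij => (hV i j hij).mono (h i) (h j)

lemma cSet_nonneg {c : α → ℝ} (hc : ∀ e, 0 ≤ c e) (S : Fin k → Finset α) :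
    0 ≤ cSet c S :=
  Finset.sum_nonneg fun _ _ => Finset.sum_nonneg fun e _ => hc e

lemma cSet_update {c : α → ℝ} {S : Fin k → Finset α} {j : Fin k} {e : α} (he : e ∉ S j) :
    cSet c (Function.update S j (insert e (S j))) = cSet c S + c e := by
  unfold cSet
  rw [← Finset.sum_erase_add _ _ (Finset.mem_univ j),
      ← Finset.sum_erase_add _ _ (Finset.mem_univ j)]
  have h1 : ∀ i ∈ Finset.univ.erase j,
      ∑ e ∈ Function.update S j (insert e (S j)) i, c e = ∑ e ∈ S i, c e := by
    intro i hi
    rw [Function.update_of_ne (Finset.mem_erase.mp hi).1]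
  rw [Finset.sum_congr rfl h1, Function.update_self, Finset.sum_insert he]
  ring

/-- Orthant submodularity: marginals decrease along `≼`. -/
lemma orthant_submod (g : (Fin k → Finset α) → ℝ)
    (hgsub : ∀ S T : Fin k → Finset α, PwDisj S → PwDisj T →
      g (kInf S T) + g (kSup S T) ≤ g S + g T)
    {S T : Fin k → Finset α} (hT : PwDisj T) (hST : ∀ i, S i ⊆ T i)
    {j : Fin k} {e : α} (he : ∀ l, e ∉ T l) :
    g (Function.update T j (insert e (T j))) - g T ≤
      g (Function.update S j (insert e (S j))) - g S := by
  set X := Function.update S j (insert e (S j)) with hX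
  have hXl : ∀ l, l ≠ j → X l = S l := fun l hl => Function.update_of_ne hl _ _
  have hXj : X j = insert e (S j) := Function.update_self _ _ _
  have hXsubT : ∀ l, X l ⊆ Function.update T j (insert e (T j)) l := by
    intro l
    by_cases hl : l = j
    · subst hl; rw [hXj, Function.update_self]
      exact Finset.insert_subset_insert _ (hST l)
    · rw [hXl l hl, Function.update_of_ne hl]; exact hST l
  have hTdisj' : PwDisj (Function.update T j (insert e (T j))) := by
    intro a b hab
    by_cases ha : a = j
    · subst ha
      rw [Function.update_self, Function.update_of_ne (Ne.symm hab)]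
      exact (Finset.disjoint_insert_left).mpr ⟨he b, hT _ _ hab⟩
    · rw [Function.update_of_ne ha]
      by_cases hb : b = j
      · subst hb
        rw [Function.update_self]
        exact (Finset.disjoint_insert_right).mpr ⟨he a, hT _ _ hab⟩
      · rw [Function.update_of_ne hb]; exact hT _ _ hab
  have hXdisj : PwDisj X := pwdisj_of_le hTdisj' hXsubT
  have hinf : kInf X T = S := by
    funext i
    show X i ∩ T i = S i
    by_cases hi : i = j
    · rw [hi, hXj, Finset.insert_inter_of_notMem (he j),
        Finset.inter_eq_left.mpr (hST j)]
    · rw [hXl i hi, Finset.inter_eq_left.mpr (hST i)]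
  have hsup : kSup X T = Function.update T j (insert e (T j)) := by
    funext i
    have hXT : ∀ l, X l ∪ T l = if l = j then insert e (T j) else T l := by
      intro l
      by_cases hl : l = j
      · subst hl; rw [hXj, if_pos rfl, Finset.insert_union,
          Finset.union_eq_right.mpr (hST l)]
      · rw [hXl l hl, if_neg hl, Finset.union_eq_right.mpr (hST l)]
    show (X i ∪ T i) \ ((Finset.univ.erase i).biUnion fun l => X l ∪ T l) = _
    ext a
    simp only [Finset.mem_sdiff, Finset.mem_biUnion, Finset.mem_erase, Finset.mem_univ,
      true_and, and_true, hXT, Function.update_apply]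
    constructor
    · exact fun h => h.1
    · intro h1
      refine ⟨h1, ?_⟩
      rintro ⟨l, hl, hla⟩
      by_cases hlj : l = j
      · have hij : ¬ i = j := fun h => hl (hlj.trans h.symm)
        rw [if_neg hij] at h1
        rw [if_pos hlj] at hla
        rcases Finset.mem_insert.mp hla with rfl | hla'
        · exact he i h1
        · exact (Finset.disjoint_left.mp (hT j i (fun h => hl (hlj.trans h))) hla') h1
      · rw [if_neg hlj] at hla
        by_cases hij : i = j
        · rw [if_pos hij] at h1
          rcases Finset.mem_insert.mp h1 with rfl | h1'
          · exact he l hla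
          · exact (Finset.disjoint_left.mp (hT j l (fun h => hlj h.symm)) h1') hla
        · rw [if_neg hij] at h1
          exact (Finset.disjoint_left.mp (hT i l (fun h => hl h.symm)) h1) hla
  have := hgsub X T hXdisj hT
  rw [hinf, hsup] at this
  linarith

end Aux

section Tel
variable {α : Type*} [DecidableEq α] {k : ℕ} [Fintype (Fin k)]

lemma telescope (g : (Fin k → Finset α) → ℝ)
    (hgsub : ∀ S T : Fin k → Finset α, PwDisj S → PwDisj T →
      g (kInf S T) + g (kSup S T) ≤ g S + g T)
    {V : Fin k → Finset α} (hV : PwDisj V) :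
    ∀ (n : ℕ) (Sa Z : Fin k → Finset α), (∑ j, (Z j \ Sa j).card) = n →
      (∀ i, Sa i ⊆ Z i) → (∀ i, Z i ⊆ V i) →
      g Z - g Sa ≤ ∑ j, ∑ e ∈ Z j \ Sa j,
        (g (Function.update Sa j (insert e (Sa j))) - g Sa) := by
  intro n
  induction n with
  | zero =>
    intro Sa Z hcard hSZ hZV
    have hZS : Sa = Z := by
      funext i
      refine Finset.Subset.antisymm (hSZ i) (Finset.sdiff_eq_empty_iff_subset.mp ?_)
      exact Finset.card_eq_zero.mp ((Finset.sum_eq_zero_iff.mp hcard) i (Finset.mem_univ i))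
    subst hZS
    simp [Finset.sdiff_self]
  | succ n ih =>
    intro Sa Z hcard hSZ hZV
    obtain ⟨j, -, hj⟩ := Finset.exists_ne_zero_of_sum_ne_zero
      (by rw [hcard]; exact Nat.succ_ne_zero n)
    obtain ⟨e, he⟩ := Finset.card_ne_zero.mp hj
    have heZ : e ∈ Z j := (Finset.mem_sdiff.mp he).1
    have heS : e ∉ Sa j := (Finset.mem_sdiff.mp he).2
    set Sa' := Function.update Sa j (insert e (Sa j)) with hSa'def
    have hSa'j : Sa' j = insert e (Sa j) := Function.update_self _ _ _
    have hSa'l : ∀ l, l ≠ j → Sa' l = Sa l := fun l hl => Function.update_of_ne hl _ _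
    have hSS' : ∀ i, Sa i ⊆ Sa' i := by
      intro i; by_cases hi : i = j
      · rw [hi, hSa'j]; exact Finset.subset_insert _ _
      · rw [hSa'l i hi]
    have hS'Z : ∀ i, Sa' i ⊆ Z i := by
      intro i; by_cases hi : i = j
      · rw [hi, hSa'j]; exact Finset.insert_subset heZ (hSZ j)
      · rw [hSa'l i hi]; exact hSZ i
    have hS'V : ∀ i, Sa' i ⊆ V i := fun i => (hS'Z i).trans (hZV i)
    have hsdj : Z j \ Sa' j = (Z j \ Sa j).erase e := by
      rw [hSa'j, Finset.sdiff_insert]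
    have hsdl : ∀ i, i ≠ j → Z i \ Sa' i = Z i \ Sa i := by
      intro i hi; rw [hSa'l i hi]
    have hcard' : (∑ i, (Z i \ Sa' i).card) = n := by
      have h3 := Finset.add_sum_erase Finset.univ
        (fun i => (Z i \ Sa' i).card) (Finset.mem_univ j)
      have h4 := Finset.add_sum_erase Finset.univ
        (fun i => (Z i \ Sa i).card) (Finset.mem_univ j)
      have h2 : ∑ i ∈ Finset.univ.erase j, (Z i \ Sa' i).card
          = ∑ i ∈ Finset.univ.erase j, (Z i \ Sa i).card :=
        Finset.sum_congr rfl fun i hi => by rw [hsdl i (Finset.mem_erase.mp hi).1]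
      have h5 : (Z j \ Sa' j).card + 1 = (Z j \ Sa j).card := by
        rw [hsdj, Finset.card_erase_of_mem he]
        have : 0 < (Z j \ Sa j).card := Finset.card_pos.mpr ⟨e, he⟩
        omega
      omega
    have hIH := ih Sa' Z hcard' hS'Z hZV
    have hterm : ∀ j' : Fin k, ∀ e' ∈ Z j' \ Sa' j',
        g (Function.update Sa' j' (insert e' (Sa' j'))) - g Sa' ≤
        g (Function.update Sa j' (insert e' (Sa j'))) - g Sa := by
      intro j' e' he'
      have he'Z : e' ∈ Z j' := (Finset.mem_sdiff.mp he').1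
      have he'n : ∀ l, e' ∉ Sa' l := by
        intro l
        by_cases hl : l = j'
        · rw [hl]; exact (Finset.mem_sdiff.mp he').2
        · intro hmem
          exact (Finset.disjoint_left.mp (hV l j' hl) (hS'V l hmem)) ((hZV j') he'Z)
      exact orthant_submod g hgsub (pwdisj_of_le hV hS'V) hSS' he'n
    have hsum : ∑ j', ∑ e' ∈ Z j' \ Sa' j',
          (g (Function.update Sa' j' (insert e' (Sa' j'))) - g Sa') ≤
        ∑ j', ∑ e' ∈ Z j' \ Sa' j',
          (g (Function.update Sa j' (insert e' (Sa j'))) - g Sa) :=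
      Finset.sum_le_sum fun j' _ => Finset.sum_le_sum fun e' he' => hterm j' e' he'
    have hsum2 : (∑ j', ∑ e' ∈ Z j' \ Sa' j',
          (g (Function.update Sa j' (insert e' (Sa j'))) - g Sa))
        + (g Sa' - g Sa)
        = ∑ j', ∑ e' ∈ Z j' \ Sa j',
          (g (Function.update Sa j' (insert e' (Sa j'))) - g Sa) := by
      have h3 := Finset.add_sum_erase Finset.univ
        (fun j' => ∑ e' ∈ Z j' \ Sa' j',
          (g (Function.update Sa j' (insert e' (Sa j'))) - g Sa)) (Finset.mem_univ j)
      have h4 := Finset.add_sum_erase Finset.univ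
        (fun j' => ∑ e' ∈ Z j' \ Sa j',
          (g (Function.update Sa j' (insert e' (Sa j'))) - g Sa)) (Finset.mem_univ j)
      have h2 : ∑ j' ∈ Finset.univ.erase j, ∑ e' ∈ Z j' \ Sa' j',
            (g (Function.update Sa j' (insert e' (Sa j'))) - g Sa)
          = ∑ j' ∈ Finset.univ.erase j, ∑ e' ∈ Z j' \ Sa j',
            (g (Function.update Sa j' (insert e' (Sa j'))) - g Sa) :=
        Finset.sum_congr rfl fun i hi => by rw [hsdl i (Finset.mem_erase.mp hi).1]
      have h5 := Finset.add_sum_erase (Z j \ Sa j)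
        (fun e' => g (Function.update Sa j (insert e' (Sa j))) - g Sa) he
      rw [hsdj] at h3
      rw [← hSa'def] at h5
      linarith
    have hdiff : g Z - g Sa = (g Z - g Sa') + (g Sa' - g Sa) := by ring
    linarith

end Tel

/-- Theoretical guarantee of the generalized distorted greedy algorithm:
`g(𝐒_m) − c(𝐒_m) ≥ (1 − e^{−1}) g(OPT) − c(OPT)`. -/
theorem generalized_distorted_greedy_lower_bound
    {α : Type*} [Fintype α] [DecidableEq α] {k : ℕ}
    (g : (Fin k → Finset α) → ℝ) (c : α → ℝ) (m : ℕ) (hm : 1 ≤ m)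
    (V : Fin k → Finset α) (hV : PwDisj V)
    -- `g` is monotonically non-decreasing and `k`-submodular with `g(∅,…,∅) ≥ 0`
    (hg0 : 0 ≤ g (fun _ => ∅))
    (hgmono : ∀ S T : Fin k → Finset α, PwDisj S → PwDisj T →
      (∀ i, S i ⊆ T i) → g S ≤ g T)
    (hgsub : ∀ S T : Fin k → Finset α, PwDisj S → PwDisj T →
      g (kInf S T) + g (kSup S T) ≤ g S + g T)
    -- `c` is a non-negative modular function
    (hc : ∀ e : α, 0 ≤ c e)
    -- the iterates of the generalized distorted greedy algorithm
    (S : ℕ → Fin k → Finset α) (jsel : ℕ → Fin k) (esel : ℕ → α)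
    (hS0 : S 0 = fun _ => ∅)
    (hsel_mem : ∀ i < m, esel i ∈ V (jsel i) \ S i (jsel i))
    (hsel_max : ∀ i < m, ∀ j : Fin k, ∀ e ∈ V j \ S i j,
      qGain g c m i (S i) j e ≤ qGain g c m i (S i) (jsel i) (esel i))
    (hupd_pos : ∀ i < m, 0 < qGain g c m i (S i) (jsel i) (esel i) →
      S (i + 1) = Function.update (S i) (jsel i) (insert (esel i) (S i (jsel i))))
    (hupd_nonpos : ∀ i < m, ¬ 0 < qGain g c m i (S i) (jsel i) (esel i) →
      S (i + 1) = S i)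
    -- `OPT` is a maximizer of `g − c` over `{𝐒 ≼ 𝐕 : |supp 𝐒| ≤ m}`
    (OPT : Fin k → Finset α) (hOPTdisj : PwDisj OPT)
    (hOPTle : ∀ i, OPT i ⊆ V i)
    (hOPTcard : (Finset.univ.biUnion OPT).card ≤ m)
    (hOPTmax : ∀ T : Fin k → Finset α, PwDisj T → (∀ i, T i ⊆ V i) →
      (Finset.univ.biUnion T).card ≤ m → g T - cSet c T ≤ g OPT - cSet c OPT) :
    (1 - Real.exp (-1)) * g OPT - cSet c OPT ≤ g (S m) - cSet c (S m) := by
  have hmR : (1:ℝ) ≤ (m:ℝ) := by exact_mod_cast hm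
  have hm0 : (0:ℝ) < (m:ℝ) := by linarith
  have hmne : (m:ℝ) ≠ 0 := ne_of_gt hm0
  have hr0 : (0:ℝ) ≤ 1 - 1/(m:ℝ) := by
    have : 1/(m:ℝ) ≤ 1 := by rw [div_le_one hm0]; exact hmR
    linarith
  have hr1 : (1:ℝ) - 1/(m:ℝ) < 1 := by
    have : (0:ℝ) < 1/(m:ℝ) := by positivity
    linarith
  -- invariant: the iterates stay below V
  have hSV : ∀ i, i ≤ m → ∀ j, S i j ⊆ V j := by
    intro i
    induction i with
    | zero => intro _ j; rw [hS0]; exact Finset.empty_subset _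
    | succ i ih =>
      intro hi j
      have him : i < m := hi
      have hprev := ih (le_of_lt him)
      by_cases hq : 0 < qGain g c m i (S i) (jsel i) (esel i)
      · rw [hupd_pos i him hq]
        by_cases hj : j = jsel i
        · rw [hj, Function.update_self]
          exact Finset.insert_subset (Finset.mem_sdiff.mp (hsel_mem i him)).1 (hprev _)
        · rw [Function.update_of_ne hj]; exact hprev j
      · rw [hupd_nonpos i him hq]; exact hprev j
  set Φ : ℕ → ℝ :=
    fun i => ((1:ℝ) - 1/(m:ℝ)) ^ (m - i) * g (S i) - cSet c (S i) with hΦdef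
  have hstep : ∀ i, i < m →
      (1/(m:ℝ)) * (((1:ℝ) - 1/(m:ℝ)) ^ (m - (i+1)) * g OPT - cSet c OPT)
        ≤ Φ (i+1) - Φ i := by
    intro i him
    have hpow : ((1:ℝ)-1/(m:ℝ)) ^ (m - i)
        = ((1:ℝ)-1/(m:ℝ)) * ((1:ℝ)-1/(m:ℝ)) ^ (m - (i+1)) := by
      have h : m - i = (m - (i+1)) + 1 := by omega
      rw [h, pow_succ']
    have hD0 : (0:ℝ) ≤ ((1:ℝ)-1/(m:ℝ)) ^ (m - (i+1)) := pow_nonneg hr0 _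
    have hB0 : (0:ℝ) ≤ max 0 (qGain g c m i (S i) (jsel i) (esel i)) := le_max_left _ _
    have hSiV := hSV i (le_of_lt him)
    have hSidisj : PwDisj (S i) := pwdisj_of_le hV hSiV
    -- the change in the distorted potential
    have hΦdiff : Φ (i+1) - Φ i = max 0 (qGain g c m i (S i) (jsel i) (esel i))
        + (1/(m:ℝ)) * ((1:ℝ)-1/(m:ℝ)) ^ (m - (i+1)) * g (S i) := by
      by_cases hq : 0 < qGain g c m i (S i) (jsel i) (esel i)
      · have hupd := hupd_pos i him hq
        have hBe : max 0 (qGain g c m i (S i) (jsel i) (esel i))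
            = qGain g c m i (S i) (jsel i) (esel i) := max_eq_right (le_of_lt hq)
        have hcup : cSet c (S (i+1)) = cSet c (S i) + c (esel i) := by
          rw [hupd]; exact cSet_update (Finset.mem_sdiff.mp (hsel_mem i him)).2
        have hqe : qGain g c m i (S i) (jsel i) (esel i)
            = ((1:ℝ)-1/(m:ℝ)) ^ (m-(i+1)) * (g (S (i+1)) - g (S i)) - c (esel i) := by
          rw [qGain, hupd]
        simp only [hΦdef]
        rw [hcup, hpow, hBe, hqe]
        ring
      · have hupd := hupd_nonpos i him hq
        have hBe : max 0 (qGain g c m i (S i) (jsel i) (esel i)) = 0 :=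
          max_eq_left (not_lt.mp hq)
        simp only [hΦdef]
        rw [hupd, hpow, hBe]
        ring
    -- the key bound on the greedy gain
    have hcount : (∑ j, (OPT j \ S i j).card) ≤ m := by
      calc ∑ j, (OPT j \ S i j).card ≤ ∑ j, (OPT j).card :=
            Finset.sum_le_sum fun j _ => Finset.card_le_card Finset.sdiff_subset
        _ = (Finset.univ.biUnion OPT).card :=
            (Finset.card_biUnion fun x _ y _ h => hOPTdisj x y h).symm
        _ ≤ m := hOPTcard
    set Z : Fin k → Finset α := fun l => S i l ∪ OPT l with hZdef
    have hZV : ∀ l, Z l ⊆ V l := fun l =>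
      Finset.union_subset (hSiV l) (hOPTle l)
    have hSiZ : ∀ l, S i l ⊆ Z l := fun l => Finset.subset_union_left
    have hZS : ∀ l, Z l \ S i l = OPT l \ S i l := fun l =>
      Finset.union_sdiff_left _ _
    have h1 : g OPT ≤ g Z :=
      hgmono OPT Z hOPTdisj (pwdisj_of_le hV hZV) fun l => Finset.subset_union_right
    have h2 := telescope g hgsub hV (∑ j, (Z j \ S i j).card) (S i) Z rfl hSiZ hZV
    simp only [hZS] at h2
    have hkey : ((1:ℝ)-1/(m:ℝ)) ^ (m-(i+1)) * g OPT
        - ((1:ℝ)-1/(m:ℝ)) ^ (m-(i+1)) * g (S i) - cSet c OPT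
        ≤ (m:ℝ) * max 0 (qGain g c m i (S i) (jsel i) (esel i)) := by
      have h4 : ((1:ℝ)-1/(m:ℝ)) ^ (m-(i+1)) * (g Z - g (S i))
          ≤ ∑ j, ∑ e ∈ OPT j \ S i j, ((1:ℝ)-1/(m:ℝ)) ^ (m-(i+1)) *
              (g (Function.update (S i) j (insert e (S i j))) - g (S i)) := by
        calc ((1:ℝ)-1/(m:ℝ)) ^ (m-(i+1)) * (g Z - g (S i))
            ≤ ((1:ℝ)-1/(m:ℝ)) ^ (m-(i+1)) * ∑ j, ∑ e ∈ OPT j \ S i j,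
                (g (Function.update (S i) j (insert e (S i j))) - g (S i)) :=
              mul_le_mul_of_nonneg_left h2 hD0
          _ = _ := by
              rw [Finset.mul_sum]
              exact Finset.sum_congr rfl fun j _ => Finset.mul_sum _ _ _
      have hcOPT : (∑ j, ∑ e ∈ OPT j \ S i j, c e) ≤ cSet c OPT :=
        Finset.sum_le_sum fun j _ =>
          Finset.sum_le_sum_of_subset_of_nonneg Finset.sdiff_subset fun e _ _ => hc e
      have hq5 : ∑ j, ∑ e ∈ OPT j \ S i j,
            (((1:ℝ)-1/(m:ℝ)) ^ (m-(i+1)) *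
              (g (Function.update (S i) j (insert e (S i j))) - g (S i)) - c e)
          ≤ ∑ j, ∑ _e ∈ OPT j \ S i j,
              max 0 (qGain g c m i (S i) (jsel i) (esel i)) := by
        refine Finset.sum_le_sum fun j _ => Finset.sum_le_sum fun e he => ?_
        have heV : e ∈ V j \ S i j := Finset.mem_sdiff.mpr
          ⟨hOPTle j (Finset.mem_sdiff.mp he).1, (Finset.mem_sdiff.mp he).2⟩
        exact le_trans (hsel_max i him j e heV) (le_max_right _ _)
      have hsplit : ∑ j, ∑ e ∈ OPT j \ S i j,
            (((1:ℝ)-1/(m:ℝ)) ^ (m-(i+1)) *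
              (g (Function.update (S i) j (insert e (S i j))) - g (S i)) - c e)
          = (∑ j, ∑ e ∈ OPT j \ S i j, ((1:ℝ)-1/(m:ℝ)) ^ (m-(i+1)) *
              (g (Function.update (S i) j (insert e (S i j))) - g (S i)))
            - ∑ j, ∑ e ∈ OPT j \ S i j, c e := by
        rw [← Finset.sum_sub_distrib]
        exact Finset.sum_congr rfl fun j _ => by rw [← Finset.sum_sub_distrib]
      have hsB : (∑ j, ∑ _e ∈ OPT j \ S i j,
            max 0 (qGain g c m i (S i) (jsel i) (esel i)))
          ≤ (m:ℝ) * max 0 (qGain g c m i (S i) (jsel i) (esel i)) := by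
        simp only [Finset.sum_const, nsmul_eq_mul]
        rw [← Finset.sum_mul]
        refine mul_le_mul_of_nonneg_right ?_ hB0
        rw [← Nat.cast_sum]
        exact_mod_cast hcount
      nlinarith [h1, h4, hcOPT, hq5, hsB, hsplit]
    -- conclude the step inequality
    rw [hΦdiff]
    have h6 : (1/(m:ℝ)) * ((m:ℝ) * max 0 (qGain g c m i (S i) (jsel i) (esel i)))
        = max 0 (qGain g c m i (S i) (jsel i) (esel i)) := by
      field_simp
    have h7 := mul_le_mul_of_nonneg_left hkey (by positivity : (0:ℝ) ≤ 1/(m:ℝ))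
    rw [h6] at h7
    linarith [h7]
  -- sum the step inequalities
  have hsum := Finset.sum_range_sub Φ m
  have hlb : ∑ i ∈ Finset.range m,
      (1/(m:ℝ)) * (((1:ℝ)-1/(m:ℝ)) ^ (m-(i+1)) * g OPT - cSet c OPT)
      ≤ Φ m - Φ 0 := by
    rw [← hsum]
    exact Finset.sum_le_sum fun i hi => hstep i (Finset.mem_range.mp hi)
  have hgeom : ∑ i ∈ Finset.range m, ((1:ℝ)-1/(m:ℝ)) ^ (m-(i+1))
      = (1 - ((1:ℝ)-1/(m:ℝ)) ^ m) * m := by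
    have h1 : ∑ i ∈ Finset.range m, ((1:ℝ)-1/(m:ℝ)) ^ (m-(i+1))
        = ∑ i ∈ Finset.range m, ((1:ℝ)-1/(m:ℝ)) ^ i := by
      rw [← Finset.sum_range_reflect (fun i => ((1:ℝ)-1/(m:ℝ)) ^ i) m]
      exact Finset.sum_congr rfl fun i hi => by
        congr 1
        have := Finset.mem_range.mp hi
        omega
    rw [h1, geom_sum_eq (ne_of_lt hr1)]
    field_simp
    ring
  have hLHS : ∑ i ∈ Finset.range m,
      (1/(m:ℝ)) * (((1:ℝ)-1/(m:ℝ)) ^ (m-(i+1)) * g OPT - cSet c OPT)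
      = (1 - ((1:ℝ)-1/(m:ℝ)) ^ m) * g OPT - cSet c OPT := by
    have hterm : ∀ i ∈ Finset.range m,
        (1/(m:ℝ)) * (((1:ℝ)-1/(m:ℝ)) ^ (m-(i+1)) * g OPT - cSet c OPT)
        = ((1:ℝ)-1/(m:ℝ)) ^ (m-(i+1)) * ((1/(m:ℝ)) * g OPT)
          - (1/(m:ℝ)) * cSet c OPT := fun i _ => by ring
    rw [Finset.sum_congr rfl hterm, Finset.sum_sub_distrib, ← Finset.sum_mul, hgeom,
      Finset.sum_const, Finset.card_range, nsmul_eq_mul]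
    field_simp
  have hΦm : Φ m = g (S m) - cSet c (S m) := by
    simp only [hΦdef]
    rw [Nat.sub_self, pow_zero, one_mul]
  have hc0 : cSet c (fun _ : Fin k => (∅ : Finset α)) = 0 := by simp [cSet]
  have hΦ0 : 0 ≤ Φ 0 := by
    simp only [hΦdef]
    rw [hS0, hc0]
    have := pow_nonneg hr0 (m - 0)
    nlinarith [hg0]
  have hOPT0 : 0 ≤ g OPT := by
    have hbu : (Finset.univ.biUnion (fun _ : Fin k => (∅ : Finset α))) = ∅ :=
      Finset.subset_empty.mp (Finset.biUnion_subset.mpr fun x _ => Finset.Subset.refl _)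
    have h := hOPTmax (fun _ => ∅) (fun i j _ => by simp)
      (fun i => Finset.empty_subset _) (by rw [hbu]; exact le_trans (by simp) hm)
    rw [hc0] at h
    have := cSet_nonneg hc OPT
    linarith [hg0]
  have hrm : ((1:ℝ)-1/(m:ℝ)) ^ m ≤ Real.exp (-1) := by
    have h1 : (1:ℝ) - 1/(m:ℝ) ≤ Real.exp (-(1/(m:ℝ))) := by
      have := Real.add_one_le_exp (-(1/(m:ℝ)))
      linarith
    calc ((1:ℝ)-1/(m:ℝ)) ^ m ≤ (Real.exp (-(1/(m:ℝ)))) ^ m := pow_le_pow_left₀ hr0 h1 m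
      _ = Real.exp (-1) := by
          rw [← Real.exp_nat_mul]
          congr 1
          field_simp
  have hfin : (1 - Real.exp (-1)) * g OPT ≤ (1 - ((1:ℝ)-1/(m:ℝ)) ^ m) * g OPT :=
    mul_le_mul_of_nonneg_right (by linarith) hOPT0
  rw [hLHS, hΦm] at hlb
  simp only [hΦdef] at hΦ0 hlb
  have h9 : (1 - ((1:ℝ) - 1/(m:ℝ)) ^ m) * g OPT - cSet c OPT
      ≤ g (S m) - cSet c (S m) := by linarith [hΦ0, hlb]
  linarith [hfin, h9]
end

section
/- In the setting of the generalized distorted greedy algorithm, define for 0 ≤ i ≤ m−1 the distorted objective Φ_i(𝐒) = (1 − 1/m)^{m−i} g(𝐒) − c(𝐒) and Ψ_i(𝐒, j, e) = max{0, (1 − 1/m)^{m−(i+1)} Δ_{e,j} g(𝐒) − c({e})}. Let 𝐒_i ≼ 𝐕, let (j*, e*) maximize (1 − 1/m)^{m−(i+1)} Δ_{e,j} g(𝐒_i) − c({e}) over j ∈ ⟦k⟧ and e ∈ V_j \ S_{i,j}, and let 𝐒_{i+1} be the algorithm's update (S_{i+1,j*} = S_{i,j*} ∪ {e*} and S_{i+1,l}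 = S_{i,l} for l ≠ j* if this maximal quantity is > 0, and 𝐒_{i+1} = 𝐒_i otherwise). Then Φ_{i+1}(𝐒_{i+1}) − Φ_i(𝐒_i) = Ψ_i(𝐒_i, j*, e*) + (1/m)(1 − 1/m)^{m−(i+1)} g(𝐒_i). -/
/-- The distorted objective `Φ_i(𝐒) = (1 − 1/m)^{m−i} g(𝐒) − c(𝐒)`. -/
noncomputable def Phi {α : Type*} {k : ℕ}
    (g : (Fin k → Finset α) → ℝ) (c : α → ℝ) (m i : ℕ)
    (S : Fin k → Finset α) : ℝ :=
  ((1 : ℝ) - 1 / (m : ℝ)) ^ (m - i) * g S - cSet c S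

/-- `Ψ_i(𝐒, j, e) = max {0, (1 − 1/m)^{m−(i+1)} Δ_{e,j} g(𝐒) − c({e})}`. -/
noncomputable def Psi {α : Type*} [DecidableEq α] {k : ℕ}
    (g : (Fin k → Finset α) → ℝ) (c : α → ℝ) (m i : ℕ)
    (S : Fin k → Finset α) (j : Fin k) (e : α) : ℝ :=
  max 0 (qGain g c m i S j e)

/-- One-step evolution of the distorted objective:
`Φ_{i+1}(𝐒_{i+1}) − Φ_i(𝐒_i) = Ψ_i(𝐒_i, j*, e*) + (1/m)(1 − 1/m)^{m−(i+1)} g(𝐒_i)`. -/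
theorem distorted_objective_difference
    {α : Type*} [Fintype α] [DecidableEq α] {k : ℕ}
    (g : (Fin k → Finset α) → ℝ) (c : α → ℝ) (hc : ∀ e : α, 0 ≤ c e)
    (m : ℕ) (hm : 1 ≤ m) (V : Fin k → Finset α) (hV : PwDisj V)
    (i : ℕ) (hi : i < m)
    (Si Snext : Fin k → Finset α) (hSdisj : PwDisj Si) (hSV : ∀ j, Si j ⊆ V j)
    (jstar : Fin k) (estar : α)
    (hmem : estar ∈ V jstar \ Si jstar)
    (hmax : ∀ j : Fin k, ∀ e ∈ V j \ Si j,
      qGain g c m i Si j e ≤ qGain g c m i Si jstar estar)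
    (hpos : 0 < qGain g c m i Si jstar estar →
      Snext = Function.update Si jstar (insert estar (Si jstar)))
    (hnonpos : ¬ 0 < qGain g c m i Si jstar estar → Snext = Si) :
    Phi g c m (i + 1) Snext - Phi g c m i Si =
      Psi g c m i Si jstar estar +
        (1 / (m : ℝ)) * ((1 : ℝ) - 1 / (m : ℝ)) ^ (m - (i + 1)) * g Si := by

  have hme : estar ∉ Si jstar := (Finset.mem_sdiff.mp hmem).2
  set p : ℝ := (1:ℝ) - 1/(m:ℝ) with hp
  have hmi : m - i = (m - (i+1)) + 1 := by omega
  have hpow : p ^ (m - i) = p * p ^ (m - (i+1)) := by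
    rw [hmi, pow_succ]; ring
  have hcupd : cSet c (Function.update Si jstar (insert estar (Si jstar)))
      = cSet c Si + c estar := by
    unfold cSet
    rw [Finset.sum_eq_sum_sdiff_singleton_add (Finset.mem_univ jstar),
        Finset.sum_eq_sum_sdiff_singleton_add (Finset.mem_univ jstar)
          (fun x => ∑ e ∈ Si x, c e)]
    simp only [Function.update_self]
    rw [Finset.sum_insert hme,
      Finset.sum_congr rfl (fun x hx => by
        rw [Function.update_of_ne (by simpa using (Finset.mem_sdiff.mp hx).2)])]
    ring
  have hm0 : (m:ℝ) ≠ 0 := Nat.cast_ne_zero.mpr (by omega)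
  have hkey : p * p ^ (m - (i+1)) = p ^ (m - (i+1)) - (1/(m:ℝ)) * p ^ (m - (i+1)) := by
    rw [hp]; ring
  by_cases h : 0 < qGain g c m i Si jstar estar
  · have hS := hpos h
    have hPsi : Psi g c m i Si jstar estar = qGain g c m i Si jstar estar :=
      max_eq_right h.le
    rw [hS, hPsi]
    unfold Phi qGain
    rw [hcupd, hpow, hkey]
    ring
  · have hS := hnonpos h
    have hPsi : Psi g c m i Si jstar estar = 0 := max_eq_left (not_lt.mp h)
    rw [hS, hPsi]
    unfold Phi
    rw [hpow, hkey]
    ring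
end

section
/- Let g : (k+1)^U → ℝ be monotonically non-decreasing and k-submodular, let c be a non-negative modular function with c(∅,…,∅) = 0, fix 𝐕 ∈ (k+1)^U and m ≥ 1. Let 𝐒_i ≼ 𝐕, let OPT ≼ 𝐕 with |supp(OPT)| ≤ m, define Ψ_i(𝐒, j, e) = max{0, (1 − 1/m)^{m−(i+1)} Δ_{e,j} g(𝐒) − c({e})}, and let (j*, e*) maximize (1 − 1/m)^{m−(i+1)} Δ_{e,j} g(𝐒_i) − c({e}) over j ∈ ⟦k⟧ and e ∈ V_j \ S_{i,j}. Then Ψ_i(𝐒_i, j*, e*) ≥ (1/m) [ (1 − 1/m)^{m−(i+1)} ( g(OPT) − g(𝐒_i) ) − c(OPT) ]. -/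
lemma pwdisj_mono {α : Type*} {k : ℕ} {V S : Fin k → Finset α}
    (hV : PwDisj V) (h : ∀ l, S l ⊆ V l) : PwDisj S :=
  fun i j hij => (hV i j hij).mono (h i) (h j)

lemma step_dim {α : Type*} [Fintype α] [DecidableEq α] {k : ℕ}
    (g : (Fin k → Finset α) → ℝ)
    (hgsub : ∀ S T : Fin k → Finset α, PwDisj S → PwDisj T →
      g (kInf S T) + g (kSup S T) ≤ g S + g T)
    (S S' : Fin k → Finset α) (hS : PwDisj S) (hS' : PwDisj S')
    (hsub : ∀ l, S l ⊆ S' l) (e : α) (he : ∀ l, e ∉ S' l) (j : Fin k) :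
    g (Function.update S' j (insert e (S' j))) - g S' ≤
      g (Function.update S j (insert e (S j))) - g S := by
  set B := Function.update S j (insert e (S j)) with hB
  have hBj : B j = insert e (S j) := Function.update_self _ _ _
  have hBn : ∀ l, l ≠ j → B l = S l := fun l hl => Function.update_of_ne hl _ _
  -- membership in B
  have hmemB : ∀ (x : α) (l : Fin k), x ∈ B l ↔ (x ∈ S l ∨ (x = e ∧ l = j)) := by
    intro x l
    by_cases hl : l = j
    · subst hl; rw [hBj]
      simp only [Finset.mem_insert]
      tauto
    · rw [hBn l hl]; tauto
  have heS : ∀ l, e ∉ S l := fun l h => he l (hsub l h)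
  have hBdisj : PwDisj B := by
    intro a b hab
    rw [Finset.disjoint_left]
    intro x hxa hxb
    rw [hmemB] at hxa hxb
    rcases hxa with hxa | ⟨rfl, rfl⟩
    · rcases hxb with hxb | ⟨rfl, rfl⟩
      · exact Finset.disjoint_left.mp (hS a b hab) hxa hxb
      · exact heS a hxa
    · rcases hxb with hxb | ⟨_, rfl⟩
      · exact heS b hxb
      · exact hab rfl
  have hinf : kInf S' B = S := by
    funext l
    ext x
    simp only [kInf, Finset.mem_inter, hmemB]
    constructor
    · rintro ⟨hx1, hx2 | ⟨rfl, rfl⟩⟩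
      · exact hx2
      · exact absurd hx1 (he l)
    · exact fun hx => ⟨hsub l hx, Or.inl hx⟩
  have hsup : kSup S' B = Function.update S' j (insert e (S' j)) := by
    funext l
    have hmemU : ∀ x : α, x ∈ Function.update S' j (insert e (S' j)) l ↔
        (x ∈ S' l ∨ (x = e ∧ l = j)) := by
      intro x
      by_cases hl : l = j
      · subst hl
        rw [Function.update_self]
        simp only [Finset.mem_insert]; tauto
      · rw [Function.update_of_ne hl]; tauto
    ext x
    rw [hmemU]
    simp only [kSup, Finset.mem_sdiff, Finset.mem_union, Finset.mem_biUnion, Finset.mem_erase,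
      Finset.mem_univ, and_true, hmemB]
    constructor
    · rintro ⟨hx1 | (hx1 | ⟨rfl, rfl⟩), _⟩
      · exact Or.inl hx1
      · exact Or.inl (hsub l hx1)
      · exact Or.inr ⟨rfl, rfl⟩
    · rintro (hx | ⟨rfl, rfl⟩)
      · refine ⟨Or.inl hx, ?_⟩
        rintro ⟨a, ha, hxa | (hxa | ⟨rfl, rfl⟩)⟩
        · exact Finset.disjoint_left.mp (hS' l a (Ne.symm ha)) hx hxa
        · exact Finset.disjoint_left.mp (hS' l a (Ne.symm ha)) hx (hsub a hxa)
        · exact he l hx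
      · refine ⟨Or.inr (Or.inr ⟨rfl, rfl⟩), ?_⟩
        rintro ⟨a, ha, hxa | (hxa | ⟨_, rfl⟩)⟩
        · exact he a hxa
        · exact heS a hxa
        · exact ha rfl
  have := hgsub S' B hS' hBdisj
  rw [hinf, hsup] at this
  linarith

lemma chain_bound {α : Type*} [Fintype α] [DecidableEq α] {k : ℕ}
    (g : (Fin k → Finset α) → ℝ)
    (hgsub : ∀ S T : Fin k → Finset α, PwDisj S → PwDisj T →
      g (kInf S T) + g (kSup S T) ≤ g S + g T)
    (V : Fin k → Finset α) (hV : PwDisj V)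
    (Si : Fin k → Finset α) (hSV : ∀ l, Si l ⊆ V l)
    (jf : α → Fin k)
    (D : Finset α) (hD : ∀ e ∈ D, e ∈ V (jf e) ∧ ∀ l, e ∉ Si l) :
    g (fun l => Si l ∪ D.filter (fun e => jf e = l)) - g Si ≤
      ∑ e ∈ D, (g (Function.update Si (jf e) (insert e (Si (jf e)))) - g Si) := by
  classical
  induction D using Finset.induction_on with
  | empty => simp
  | @insert a D ha ih =>
    have hDa : ∀ e ∈ D, e ∈ V (jf e) ∧ ∀ l, e ∉ Si l := fun e he =>
      hD e (Finset.mem_insert_of_mem he)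
    have haV : a ∈ V (jf a) := (hD a (Finset.mem_insert_self _ _)).1
    have haS : ∀ l, a ∉ Si l := (hD a (Finset.mem_insert_self _ _)).2
    set SD : Fin k → Finset α := fun l => Si l ∪ D.filter (fun e => jf e = l) with hSD
    have hSDV : ∀ l, SD l ⊆ V l := by
      intro l x hx
      rcases Finset.mem_union.mp hx with h | h
      · exact hSV l h
      · obtain ⟨hxD, hxl⟩ := Finset.mem_filter.mp h
        exact hxl ▸ (hDa x hxD).1
    have hSDdisj : PwDisj SD := pwdisj_mono hV hSDV
    have hSidisj : PwDisj Si := pwdisj_mono hV hSV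
    have hsubSD : ∀ l, Si l ⊆ SD l := fun l => Finset.subset_union_left
    have haSD : ∀ l, a ∉ SD l := by
      intro l h
      rcases Finset.mem_union.mp h with h | h
      · exact haS l h
      · exact ha (Finset.mem_filter.mp h).1
    have hins : (fun l => Si l ∪ (insert a D).filter (fun e => jf e = l))
        = Function.update SD (jf a) (insert a (SD (jf a))) := by
      funext l
      by_cases hl : l = jf a
      · subst hl
        rw [Function.update_self, hSD]
        rw [Finset.filter_insert, if_pos rfl, Finset.union_insert]
      · rw [Function.update_of_ne hl, hSD]
        simp only [Finset.filter_insert]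
        rw [if_neg (fun h => hl h.symm)]
    rw [hins, Finset.sum_insert ha]
    have hstep := step_dim g hgsub Si SD hSidisj hSDdisj hsubSD a haSD (jf a)
    have hih := ih hDa
    linarith

/-- Lower bound for `Ψ_i`:
`Ψ_i(𝐒_i, j*, e*) ≥ (1/m) [ (1 − 1/m)^{m−(i+1)} ( g(OPT) − g(𝐒_i) ) − c(OPT) ]`. -/
theorem Psi_lower_bound
    {α : Type*} [Fintype α] [DecidableEq α] {k : ℕ}
    (g : (Fin k → Finset α) → ℝ) (c : α → ℝ) (hc : ∀ e : α, 0 ≤ c e)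
    (m : ℕ) (hm : 1 ≤ m) (V : Fin k → Finset α) (hV : PwDisj V)
    (hgmono : ∀ S T : Fin k → Finset α, PwDisj S → PwDisj T →
      (∀ i, S i ⊆ T i) → g S ≤ g T)
    (hgsub : ∀ S T : Fin k → Finset α, PwDisj S → PwDisj T →
      g (kInf S T) + g (kSup S T) ≤ g S + g T)
    (i : ℕ)
    (Si : Fin k → Finset α) (hSdisj : PwDisj Si) (hSV : ∀ j, Si j ⊆ V j)
    (OPT : Fin k → Finset α) (hOPTdisj : PwDisj OPT)
    (hOPTle : ∀ j, OPT j ⊆ V j)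
    (hOPTcard : (Finset.univ.biUnion OPT).card ≤ m)
    (jstar : Fin k) (estar : α)
    (hmem : estar ∈ V jstar \ Si jstar)
    (hmax : ∀ j : Fin k, ∀ e ∈ V j \ Si j,
      qGain g c m i Si j e ≤ qGain g c m i Si jstar estar) :
    (1 / (m : ℝ)) * (((1 : ℝ) - 1 / (m : ℝ)) ^ (m - (i + 1)) * (g OPT - g Si) - cSet c OPT) ≤
      Psi g c m i Si jstar estar := by
  classical
  set β : ℝ := ((1 : ℝ) - 1 / (m : ℝ)) ^ (m - (i + 1)) with hβdef
  set P : ℝ := Psi g c m i Si jstar estar with hPdef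
  have hm1 : (1 : ℝ) ≤ (m : ℝ) := by exact_mod_cast hm
  have hm0 : (0 : ℝ) < (m : ℝ) := lt_of_lt_of_le one_pos hm1
  have hβ0 : 0 ≤ β := by
    apply pow_nonneg
    have : 1 / (m : ℝ) ≤ 1 := by
      rw [div_le_one hm0]; exact hm1
    linarith
  have hP0 : 0 ≤ P := le_max_left _ _
  have huniq : ∀ (x : α) (l l' : Fin k), x ∈ V l → x ∈ V l' → l = l' := by
    intro x l l' h1 h2
    by_contra hne
    exact Finset.disjoint_left.mp (hV l l' hne) h1 h2
  set jf : α → Fin k := fun e => if h : ∃ l, e ∈ OPT l then h.choose else jstar with hjf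
  have hjfspec : ∀ (e : α) (l : Fin k), e ∈ OPT l → jf e = l := by
    intro e l hel
    have hex : ∃ l, e ∈ OPT l := ⟨l, hel⟩
    have h1 : e ∈ OPT hex.choose := hex.choose_spec
    have h2 : jf e = hex.choose := by rw [hjf]; exact dif_pos hex
    rw [h2]
    exact huniq e _ l (hOPTle _ h1) (hOPTle l hel)
  set D : Finset α := Finset.univ.biUnion OPT \ Finset.univ.biUnion Si with hDdef
  have hDmem : ∀ e ∈ D, e ∈ OPT (jf e) ∧ ∀ l, e ∉ Si l := by
    intro e he
    rw [hDdef, Finset.mem_sdiff] at he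
    obtain ⟨he1, he2⟩ := he
    obtain ⟨l, -, hel⟩ := Finset.mem_biUnion.mp he1
    refine ⟨(hjfspec e l hel) ▸ hel, fun l' hl' => he2 (Finset.mem_biUnion.mpr ⟨l', Finset.mem_univ _, hl'⟩)⟩
  have hDprop : ∀ e ∈ D, e ∈ V (jf e) ∧ ∀ l, e ∉ Si l := fun e he =>
    ⟨hOPTle _ ((hDmem e he).1), (hDmem e he).2⟩
  -- the union tuple
  have hT : (fun l => Si l ∪ D.filter (fun e => jf e = l)) = (fun l => Si l ∪ OPT l) := by
    funext l
    ext x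
    simp only [Finset.mem_union, Finset.mem_filter]
    constructor
    · rintro (hx | ⟨hxD, hxl⟩)
      · exact Or.inl hx
      · exact Or.inr (hxl ▸ (hDmem x hxD).1)
    · rintro (hx | hx)
      · exact Or.inl hx
      · by_cases hxs : x ∈ Finset.univ.biUnion Si
        · obtain ⟨l', -, hxl'⟩ := Finset.mem_biUnion.mp hxs
          have : l' = l := huniq x l' l (hSV l' hxl') (hOPTle l hx)
          exact Or.inl (this ▸ hxl')
        · have hxD : x ∈ D := by
            rw [hDdef, Finset.mem_sdiff]
            exact ⟨Finset.mem_biUnion.mpr ⟨l, Finset.mem_univ _, hx⟩, hxs⟩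
          exact Or.inr ⟨hxD, hjfspec x l hx⟩
  have hTV : ∀ l, Si l ∪ OPT l ⊆ V l := fun l =>
    Finset.union_subset (hSV l) (hOPTle l)
  have h1 : g OPT ≤ g (fun l => Si l ∪ OPT l) :=
    hgmono OPT _ hOPTdisj (pwdisj_mono hV hTV) (fun l => Finset.subset_union_right)
  have h2 : g (fun l => Si l ∪ OPT l) - g Si ≤
      ∑ e ∈ D, (g (Function.update Si (jf e) (insert e (Si (jf e)))) - g Si) := by
    have := chain_bound g hgsub V hV Si hSV jf D hDprop
    rwa [hT] at this
  have h3 : ∀ e ∈ D,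
      β * (g (Function.update Si (jf e) (insert e (Si (jf e)))) - g Si) ≤ P + c e := by
    intro e he
    have hmem' : e ∈ V (jf e) \ Si (jf e) :=
      Finset.mem_sdiff.mpr ⟨(hDprop e he).1, (hDprop e he).2 _⟩
    have := hmax (jf e) e hmem'
    have hPs : qGain g c m i Si jstar estar ≤ P := le_max_right _ _
    rw [qGain] at this
    have : β * (g (Function.update Si (jf e) (insert e (Si (jf e)))) - g Si) - c e ≤ P :=
      le_trans this hPs
    linarith
  have hDcard : (D.card : ℝ) ≤ (m : ℝ) := by
    have h := le_trans (Finset.card_le_card (Finset.sdiff_subset (s := Finset.univ.biUnion OPT)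
      (t := Finset.univ.biUnion Si))) hOPTcard
    exact_mod_cast h
  have hsumc : ∑ e ∈ D, c e ≤ cSet c OPT := by
    have hpd : (↑(Finset.univ : Finset (Fin k)) : Set (Fin k)).PairwiseDisjoint OPT :=
      fun a _ b _ hab => hOPTdisj a b hab
    have heq : cSet c OPT = ∑ e ∈ Finset.univ.biUnion OPT, c e := by
      rw [cSet, Finset.sum_biUnion hpd]
    rw [heq]
    apply Finset.sum_le_sum_of_subset_of_nonneg
    · exact Finset.sdiff_subset
    · exact fun e _ _ => hc e
  have hmain : β * (g OPT - g Si) - cSet c OPT ≤ (m : ℝ) * P := by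
    have hA : β * (g OPT - g Si) ≤ β * ((g (fun l => Si l ∪ OPT l)) - g Si) :=
      mul_le_mul_of_nonneg_left (by linarith) hβ0
    have hB : β * ((g (fun l => Si l ∪ OPT l)) - g Si) ≤
        ∑ e ∈ D, β * (g (Function.update Si (jf e) (insert e (Si (jf e)))) - g Si) := by
      rw [← Finset.mul_sum]
      exact mul_le_mul_of_nonneg_left h2 hβ0
    have hC : ∑ e ∈ D, β * (g (Function.update Si (jf e) (insert e (Si (jf e)))) - g Si) ≤
        ∑ e ∈ D, (P + c e) := Finset.sum_le_sum h3
    have hDsum : ∑ e ∈ D, (P + c e) = D.card * P + ∑ e ∈ D, c e := by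
      rw [Finset.sum_add_distrib, Finset.sum_const, nsmul_eq_mul]
    have hE : (D.card : ℝ) * P ≤ (m : ℝ) * P := mul_le_mul_of_nonneg_right hDcard hP0
    linarith
  calc (1 / (m : ℝ)) * (β * (g OPT - g Si) - cSet c OPT)
      ≤ (1 / (m : ℝ)) * ((m : ℝ) * P) :=
        mul_le_mul_of_nonneg_left hmain (by positivity)
    _ = P := by field_simp
end

section
/- Let g : (k+1)^U → ℝ be monotonically non-decreasing and k-submodular, fix 𝐕 ∈ (k+1)^U, and let 𝐒 ≼ 𝐕 and 𝐔 = (U_1,…,U_k) with U_j ⊆ V_j \ S_j for each j. Then Σ_{j=1}^k g(S_1,…,S_{j−1}, S_j ∪ U_j, S_{j+1},…,S_k) ≥ g(𝐒 ⊔ 𝐔) + (k−1) g(𝐒), where 𝐒 ⊔ 𝐔 has j-th component S_j ∪ U_j. -/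
/-- For a monotonically non-decreasing `k`-submodular `g`, a tuple
`𝐒 ≼ 𝐕` and `U_j ⊆ V_j \ S_j` for each `j`, one has
`Σ_j g(S_1,…,S_j ∪ U_j,…,S_k) ≥ g(𝐒 ⊔ 𝐔) + (k−1) g(𝐒)`, where the `j`-th component of
`𝐒 ⊔ 𝐔` is `S_j ∪ U_j`. -/
theorem sum_update_ge_join_add
    {α : Type*} [Fintype α] [DecidableEq α] {k : ℕ}
    (g : (Fin k → Finset α) → ℝ)
    (hgmono : ∀ S T : Fin k → Finset α, PwDisj S → PwDisj T →
      (∀ i, S i ⊆ T i) → g S ≤ g T)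
    (hgsub : ∀ S T : Fin k → Finset α, PwDisj S → PwDisj T →
      g (kInf S T) + g (kSup S T) ≤ g S + g T)
    (V S U : Fin k → Finset α) (hV : PwDisj V)
    (hS : PwDisj S) (hSV : ∀ j, S j ⊆ V j)
    (hU : ∀ j, U j ⊆ V j \ S j) :
    g (fun j => S j ∪ U j) + ((k : ℝ) - 1) * g S ≤
      ∑ j, g (Function.update S j (S j ∪ U j)) := by
  classical
  set A : ℕ → (Fin k → Finset α) := fun m i => if (i : ℕ) < m then S i ∪ U i else S i with hA
  set T : Fin k → (Fin k → Finset α) := fun j => Function.update S j (S j ∪ U j) with hT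
  have hUV : ∀ i, S i ∪ U i ⊆ V i := by
    intro i x hx
    rcases Finset.mem_union.1 hx with h | h
    · exact hSV i h
    · exact (Finset.mem_sdiff.1 (hU i h)).1
  have hpw : ∀ (W : Fin k → Finset α), (∀ i, W i ⊆ V i) → PwDisj W := by
    intro W hW i j hij
    exact Finset.disjoint_of_subset_left (hW i)
      (Finset.disjoint_of_subset_right (hW j) (hV i j hij))
  have hAV : ∀ m i, A m i ⊆ V i := by
    intro m i; simp only [hA]; split
    · exact hUV i
    · exact hSV i
  have hApw : ∀ m, PwDisj (A m) := fun m => hpw _ (hAV m)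
  have hTV : ∀ (j : Fin k) i, T j i ⊆ V i := by
    intro j i
    rcases eq_or_ne i j with rfl | h
    · simpa [hT] using hUV i
    · simpa [hT, Function.update_of_ne h] using hSV i
  have hTpw : ∀ j, PwDisj (T j) := fun j => hpw _ (hTV j)
  have hmeet : ∀ (m : Fin k), kInf (A (m : ℕ)) (T m) = S := by
    intro m; funext i
    simp only [kInf, hT]
    rcases eq_or_ne i m with rfl | h
    · simp [hA, Finset.inter_union_distrib_left]
    · rw [Function.update_of_ne h]
      simp only [hA]
      split
      · ext x; simp
      · exact Finset.inter_self _
  have hsup : ∀ (m : Fin k), kSup (A (m : ℕ)) (T m) = A ((m : ℕ) + 1) := by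
    intro m; funext i
    have hcomp : ∀ j : Fin k, A (m : ℕ) j ∪ T m j = A ((m : ℕ) + 1) j := by
      intro j
      rcases eq_or_ne j m with rfl | h
      · simp [hA, hT, Nat.lt_succ_iff]
      · have hj : (j : ℕ) ≠ (m : ℕ) := fun hc => h (Fin.ext hc)
        have hiff : ((j : ℕ) < (m : ℕ) + 1) = ((j : ℕ) < (m : ℕ)) := by
          rw [eq_iff_iff, Nat.lt_succ_iff]
          exact ⟨fun hle => lt_of_le_of_ne hle hj, le_of_lt⟩
        simp only [hA, hT, Function.update_of_ne h, hiff]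
        split
        · exact Finset.union_eq_left.2 Finset.subset_union_left
        · exact Finset.union_self _
    simp only [kSup, hcomp]
    have hdisj : Disjoint (A ((m : ℕ) + 1) i)
        ((Finset.univ.erase i).biUnion fun j => A ((m : ℕ) + 1) j) := by
      rw [Finset.disjoint_biUnion_right]
      intro j hj
      exact hpw _ (hAV _) i j (Ne.symm (Finset.ne_of_mem_erase hj))
    exact Finset.sdiff_eq_self_of_disjoint hdisj
  have key : ∀ (m : Fin k), g (A ((m : ℕ) + 1)) + g S ≤ g (A (m : ℕ)) + g (T m) := by
    intro m
    have := hgsub (A (m : ℕ)) (T m) (hApw _) (hTpw m)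
    rw [hmeet m, hsup m] at this
    linarith
  have main : ∀ n, n ≤ k →
      g (A n) + (n : ℝ) * g S ≤ g S +
        ∑ j ∈ Finset.univ.filter (fun j : Fin k => (j : ℕ) < n), g (T j) := by
    intro n hn
    induction n with
    | zero =>
        simp [hA]
    | succ n ih =>
        have hnk : n < k := hn
        have ihh := ih (le_of_lt hnk)
        set m : Fin k := ⟨n, hnk⟩ with hm
        have hkey := key m
        have hfil : Finset.univ.filter (fun j : Fin k => (j : ℕ) < n + 1) =
            insert m (Finset.univ.filter (fun j : Fin k => (j : ℕ) < n)) := by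
          ext j
          simp only [Finset.mem_filter, Finset.mem_insert, Finset.mem_univ, true_and]
          constructor
          · intro hj
            rcases Nat.lt_succ_iff_lt_or_eq.1 hj with h | h
            · exact Or.inr h
            · exact Or.inl (Fin.ext h)
          · rintro (rfl | h)
            · exact Nat.lt_succ_self n
            · exact Nat.lt_succ_of_lt h
        have hmem : m ∉ Finset.univ.filter (fun j : Fin k => (j : ℕ) < n) := by
          simp [hm]
        rw [hfil, Finset.sum_insert hmem]
        have : ((n : ℕ) + 1 : ℝ) * g S = (n : ℝ) * g S + g S := by push_cast; ring
        push_cast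
        have hAn : g (A (n + 1)) + g S ≤ g (A n) + g (T m) := hkey
        linarith
  have hk := main k le_rfl
  have hfilk : Finset.univ.filter (fun j : Fin k => (j : ℕ) < k) = Finset.univ := by
    ext j; simp [j.isLt]
  have hAk : A k = fun j => S j ∪ U j := by
    funext j; simp [hA, j.isLt]
  rw [hfilk, hAk] at hk
  linarith
end

section
/- Let P be a π-stationary transition matrix on the finite product state space X = X^(1) × … × X^(d), let k ∈ ℕ, and define f(𝐒) = 𝕀(⊗_{i=1}^k P^(S_i)) = Σ_{i=1}^k 𝕀(P^(S_i)) on (k+1)^⟦d⟧. Then f is pairwise monotonically non-decreasing: for every 𝐒 ∈ (k+1)^⟦d⟧, every e ∉ supp(𝐒), and every pair i ≠ j in ⟦k⟧, one has Δ_{e,i} f(𝐒) + Δ_{e,j} f(𝐒) ≥ 0; indeed Δ_{e,i} f(𝐒) + Δ_{e,j} f(𝐒) = D(P^(S_i ∪ {e}) ‖ P^(S_i) ⊗ P^(e)) + D(P^(S_j ∪ {e}) ‖ P^(S_j) ⊗ P^(e)) ≥ 0. -/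
open scoped Classical

noncomputable section

variable {d : ℕ}

/-- Restriction of a global state to the coordinates in `S`. -/
def restrict (𝒳 : Fin d → Type) (S : Finset (Fin d)) (x : ∀ i, 𝒳 i) :
    ∀ i : S, 𝒳 i.1 := fun i => x i.1

/-- Marginal of `π` on the coordinates in `S`. -/
def marginal (𝒳 : Fin d → Type) [∀ i, Fintype (𝒳 i)]
    (π : (∀ i, 𝒳 i) → ℝ) (S : Finset (Fin d)) (z : ∀ i : S, 𝒳 i.1) : ℝ :=
  ∑ x : ∀ i, 𝒳 i, if restrict 𝒳 S x = z then π x else 0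

/-- Keep-`S`-in transition matrix of `P` with respect to `π`. -/
def keepIn (𝒳 : Fin d → Type) [∀ i, Fintype (𝒳 i)]
    (π : (∀ i, 𝒳 i) → ℝ) (P : (∀ i, 𝒳 i) → (∀ i, 𝒳 i) → ℝ)
    (S : Finset (Fin d)) (z w : ∀ i : S, 𝒳 i.1) : ℝ :=
  (∑ x : ∀ i, 𝒳 i, ∑ y : ∀ i, 𝒳 i,
      if restrict 𝒳 S x = z ∧ restrict 𝒳 S y = w then π x * P x y else 0) /
    marginal 𝒳 π S z

/-- Entropy rate of a transition matrix `M` with respect to `μ`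
    (with the convention `0 ln 0 = 0`). -/
def entRate {Y : Type*} [Fintype Y] (μ : Y → ℝ) (M : Y → Y → ℝ) : ℝ :=
  -∑ x, ∑ y, μ x * M x y * Real.log (M x y)

/-- KL divergence rate from `L` to `M` with respect to `μ`
    (with the convention `0 ln (0/a) = 0`). -/
def klRate {Y : Type*} [Fintype Y] (μ : Y → ℝ) (M L : Y → Y → ℝ) : ℝ :=
  ∑ x, ∑ y, μ x * M x y * Real.log (M x y / L x y)

/-- Keep-`{i}`-in single-coordinate transition matrix `P^(i)`. -/
def single (𝒳 : Fin d → Type) [∀ i, Fintype (𝒳 i)]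
    (π : (∀ i, 𝒳 i) → ℝ) (P : (∀ i, 𝒳 i) → (∀ i, 𝒳 i) → ℝ)
    (i : Fin d) (a b : 𝒳 i) : ℝ :=
  (∑ x : ∀ j, 𝒳 j, ∑ y : ∀ j, 𝒳 j, if x i = a ∧ y i = b then π x * P x y else 0) /
    (∑ x : ∀ j, 𝒳 j, if x i = a then π x else 0)

/-- Tensor product over `S` of the single-coordinate matrices `P^(i)`, `i ∈ S`. -/
def indepKernel (𝒳 : Fin d → Type) [∀ i, Fintype (𝒳 i)]
    (π : (∀ i, 𝒳 i) → ℝ) (P : (∀ i, 𝒳 i) → (∀ i, 𝒳 i) → ℝ)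
    (S : Finset (Fin d)) (z w : ∀ i : S, 𝒳 i.1) : ℝ :=
  ∏ i : S, single 𝒳 π P i.1 (z i) (w i)

/-- Distance to independence `𝕀(P^(S)) = D(P^(S) ‖ ⊗_{i ∈ S} P^(i))`. -/
def distToIndep (𝒳 : Fin d → Type) [∀ i, Fintype (𝒳 i)]
    (π : (∀ i, 𝒳 i) → ℝ) (P : (∀ i, 𝒳 i) → (∀ i, 𝒳 i) → ℝ)
    (S : Finset (Fin d)) : ℝ :=
  klRate (marginal 𝒳 π S) (keepIn 𝒳 π P S) (indepKernel 𝒳 π P S)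

/-- Entropy rate `H(P^(S))` of the keep-`S`-in transition matrix. -/
def entKeepIn (𝒳 : Fin d → Type) [∀ i, Fintype (𝒳 i)]
    (π : (∀ i, 𝒳 i) → ℝ) (P : (∀ i, 𝒳 i) → (∀ i, 𝒳 i) → ℝ)
    (S : Finset (Fin d)) : ℝ :=
  entRate (marginal 𝒳 π S) (keepIn 𝒳 π P S)

/-- Distance to stationarity `D(P^(S) ‖ Π^(S))`, where every row of `Π^(S)` is `π^(S)`. -/
def distToStat (𝒳 : Fin d → Type) [∀ i, Fintype (𝒳 i)]
    (π : (∀ i, 𝒳 i) → ℝ) (P : (∀ i, 𝒳 i) → (∀ i, 𝒳 i) → ℝ)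
    (S : Finset (Fin d)) : ℝ :=
  klRate (marginal 𝒳 π S) (keepIn 𝒳 π P S) (fun _ w => marginal 𝒳 π S w)

/-- Single-coordinate marginal `π^(i)`. -/
def singleMarginal (𝒳 : Fin d → Type) [∀ i, Fintype (𝒳 i)]
    (π : (∀ i, 𝒳 i) → ℝ) (i : Fin d) (a : 𝒳 i) : ℝ :=
  ∑ x : ∀ j, 𝒳 j, if x i = a then π x else 0


/-- The kernel `P^(S) ⊗ P^(e)`, viewed (after reordering coordinates) as a transition
matrix on `X^(S ∪ {e})`. -/
def splitKernel (𝒳 : Fin d → Type) [∀ i, Fintype (𝒳 i)]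
    (π : (∀ i, 𝒳 i) → ℝ) (P : (∀ i, 𝒳 i) → (∀ i, 𝒳 i) → ℝ)
    (S : Finset (Fin d)) (e : Fin d)
    (z w : ∀ i : (insert e S : Finset (Fin d)), 𝒳 i.1) : ℝ :=
  keepIn 𝒳 π P S (fun j => z ⟨j.1, Finset.mem_insert_of_mem j.2⟩)
      (fun j => w ⟨j.1, Finset.mem_insert_of_mem j.2⟩) *
    single 𝒳 π P e (z ⟨e, Finset.mem_insert_self e S⟩) (w ⟨e, Finset.mem_insert_self e S⟩)

/-- The divergence `D(P^(S ∪ {e}) ‖ P^(S) ⊗ P^(e))`, computed with respect to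
`π^(S ∪ {e})`. -/
def dSplit (𝒳 : Fin d → Type) [∀ i, Fintype (𝒳 i)]
    (π : (∀ i, 𝒳 i) → ℝ) (P : (∀ i, 𝒳 i) → (∀ i, 𝒳 i) → ℝ)
    (S : Finset (Fin d)) (e : Fin d) : ℝ :=
  klRate (marginal 𝒳 π (insert e S)) (keepIn 𝒳 π P (insert e S)) (splitKernel 𝒳 π P S e)


section Helpers
set_option linter.unusedSectionVars false

variable (𝒳 : Fin d → Type) [∀ i, Fintype (𝒳 i)] [∀ i, Nonempty (𝒳 i)]
  (π : (∀ i, 𝒳 i) → ℝ) (P : (∀ i, 𝒳 i) → (∀ i, 𝒳 i) → ℝ)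

/-- Numerator of `keepIn`. -/
def keepNum (S : Finset (Fin d)) (z w : ∀ i : S, 𝒳 i.1) : ℝ :=
  ∑ x : ∀ i, 𝒳 i, ∑ y : ∀ i, 𝒳 i,
      if restrict 𝒳 S x = z ∧ restrict 𝒳 S y = w then π x * P x y else 0

/-- Numerator of `single`. -/
def sNum (i : Fin d) (a b : 𝒳 i) : ℝ :=
  ∑ x : ∀ j, 𝒳 j, ∑ y : ∀ j, 𝒳 j, if x i = a ∧ y i = b then π x * P x y else 0

theorem keepIn_eq (S : Finset (Fin d)) (z w : ∀ i : S, 𝒳 i.1) :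
    keepIn 𝒳 π P S z w = keepNum 𝒳 π P S z w / marginal 𝒳 π S z := rfl

theorem single_eq (i : Fin d) (a b : 𝒳 i) :
    single 𝒳 π P i a b = sNum 𝒳 π P i a b / singleMarginal 𝒳 π i a := rfl

theorem marginal_pos (hπpos : ∀ x, 0 < π x) (S : Finset (Fin d)) (z : ∀ i : S, 𝒳 i.1) :
    0 < marginal 𝒳 π S z := by
  classical
  refine Finset.sum_pos' (fun x _ => ?_) ?_
  case refine_1 =>
    by_cases h : restrict 𝒳 S x = z <;> simp [h, (hπpos x).le]
  refine ⟨fun i => if h : i ∈ S then z ⟨i, h⟩ else Classical.arbitrary _, Finset.mem_univ _, ?_⟩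
  have : restrict 𝒳 S (fun i => if h : i ∈ S then z ⟨i, h⟩ else Classical.arbitrary _) = z := by
    funext i
    simp [restrict, i.2]
  rw [if_pos this]
  exact hπpos _

theorem singleMarginal_pos (hπpos : ∀ x, 0 < π x) (i : Fin d) (a : 𝒳 i) :
    0 < singleMarginal 𝒳 π i a := by
  classical
  refine Finset.sum_pos' (fun x _ => ?_) ?_
  case refine_1 =>
    by_cases h : x i = a <;> simp [h, (hπpos x).le]
  refine ⟨Function.update (fun j => Classical.arbitrary (𝒳 j)) i a, Finset.mem_univ _, ?_⟩
  rw [if_pos (Function.update_self i a _)]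
  exact hπpos _

theorem keepNum_nonneg (hπpos : ∀ x, 0 < π x) (hPnonneg : ∀ x y, 0 ≤ P x y)
    (S : Finset (Fin d)) (z w : ∀ i : S, 𝒳 i.1) : 0 ≤ keepNum 𝒳 π P S z w := by
  refine Finset.sum_nonneg fun x _ => Finset.sum_nonneg fun y _ => ?_
  split
  · exact mul_nonneg (hπpos x).le (hPnonneg x y)
  · exact le_rfl

theorem sNum_nonneg (hπpos : ∀ x, 0 < π x) (hPnonneg : ∀ x y, 0 ≤ P x y)
    (i : Fin d) (a b : 𝒳 i) : 0 ≤ sNum 𝒳 π P i a b := by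
  refine Finset.sum_nonneg fun x _ => Finset.sum_nonneg fun y _ => ?_
  split
  · exact mul_nonneg (hπpos x).le (hPnonneg x y)
  · exact le_rfl

theorem keepIn_nonneg (hπpos : ∀ x, 0 < π x) (hPnonneg : ∀ x y, 0 ≤ P x y)
    (S : Finset (Fin d)) (z w : ∀ i : S, 𝒳 i.1) : 0 ≤ keepIn 𝒳 π P S z w :=
  div_nonneg (keepNum_nonneg 𝒳 π P hπpos hPnonneg S z w) (marginal_pos 𝒳 π hπpos S z).le

theorem single_nonneg (hπpos : ∀ x, 0 < π x) (hPnonneg : ∀ x y, 0 ≤ P x y)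
    (i : Fin d) (a b : 𝒳 i) : 0 ≤ single 𝒳 π P i a b :=
  div_nonneg (sNum_nonneg 𝒳 π P hπpos hPnonneg i a b) (singleMarginal_pos 𝒳 π hπpos i a).le

theorem mul_keepIn (hπpos : ∀ x, 0 < π x) (S : Finset (Fin d)) (z w : ∀ i : S, 𝒳 i.1) :
    marginal 𝒳 π S z * keepIn 𝒳 π P S z w = keepNum 𝒳 π P S z w := by
  rw [keepIn_eq, mul_div_cancel₀]
  exact (marginal_pos 𝒳 π hπpos S z).ne'

theorem keepNum_row (hProw : ∀ x, ∑ y, P x y = 1) (S : Finset (Fin d))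
    (z : ∀ i : S, 𝒳 i.1) : ∑ w, keepNum 𝒳 π P S z w = marginal 𝒳 π S z := by
  classical
  unfold keepNum marginal
  rw [Finset.sum_comm]
  refine Finset.sum_congr rfl fun x _ => ?_
  rw [Finset.sum_comm]
  by_cases hx : restrict 𝒳 S x = z
  · simp only [hx, true_and, if_pos]
    calc (∑ y, ∑ w, if restrict 𝒳 S y = w then π x * P x y else 0)
        = ∑ y, π x * P x y := by
          refine Finset.sum_congr rfl fun y _ => ?_
          simp
      _ = π x := by rw [← Finset.mul_sum, hProw, mul_one]
  · simp [hx]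

theorem keepIn_row (hπpos : ∀ x, 0 < π x) (hProw : ∀ x, ∑ y, P x y = 1)
    (S : Finset (Fin d)) (z : ∀ i : S, 𝒳 i.1) : ∑ w, keepIn 𝒳 π P S z w = 1 := by
  simp only [keepIn_eq]
  rw [← Finset.sum_div, keepNum_row 𝒳 π P hProw, div_self (marginal_pos 𝒳 π hπpos S z).ne']

theorem sNum_row (hProw : ∀ x, ∑ y, P x y = 1) (i : Fin d) (a : 𝒳 i) :
    ∑ b, sNum 𝒳 π P i a b = singleMarginal 𝒳 π i a := by
  classical
  unfold sNum singleMarginal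
  rw [Finset.sum_comm]
  refine Finset.sum_congr rfl fun x _ => ?_
  rw [Finset.sum_comm]
  by_cases hx : x i = a
  · simp only [hx, true_and, if_pos]
    calc (∑ y, ∑ b, if y i = b then π x * P x y else 0)
        = ∑ y, π x * P x y := by
          refine Finset.sum_congr rfl fun y _ => ?_
          simp
      _ = π x := by rw [← Finset.mul_sum, hProw, mul_one]
  · simp [hx]

theorem single_row (hπpos : ∀ x, 0 < π x) (hProw : ∀ x, ∑ y, P x y = 1)
    (i : Fin d) (a : 𝒳 i) : ∑ b, single 𝒳 π P i a b = 1 := by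
  simp only [single_eq]
  rw [← Finset.sum_div, sNum_row 𝒳 π P hProw, div_self (singleMarginal_pos 𝒳 π hπpos i a).ne']

theorem sum_swap4 {A B C D : Type*} [Fintype A] [Fintype B] [Fintype C] [Fintype D]
    (f : A → B → C → D → ℝ) :
    ∑ z, ∑ w, ∑ x, ∑ y, f z w x y = ∑ x, ∑ y, ∑ z, ∑ w, f z w x y :=
  calc ∑ z, ∑ w, ∑ x, ∑ y, f z w x y
      = ∑ z, ∑ x, ∑ w, ∑ y, f z w x y :=
        Finset.sum_congr rfl fun z _ => Finset.sum_comm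
    _ = ∑ x, ∑ z, ∑ w, ∑ y, f z w x y := Finset.sum_comm
    _ = ∑ x, ∑ z, ∑ y, ∑ w, f z w x y :=
        Finset.sum_congr rfl fun x _ => Finset.sum_congr rfl fun z _ => Finset.sum_comm
    _ = ∑ x, ∑ y, ∑ z, ∑ w, f z w x y :=
        Finset.sum_congr rfl fun x _ => Finset.sum_comm

/-- Transfer lemma: sums against `keepNum` lift to sums over the full space. -/
theorem transfer (S : Finset (Fin d)) (h : (∀ i : S, 𝒳 i.1) → (∀ i : S, 𝒳 i.1) → ℝ) :
    ∑ z, ∑ w, keepNum 𝒳 π P S z w * h z w =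
      ∑ x, ∑ y, π x * P x y * h (restrict 𝒳 S x) (restrict 𝒳 S y) := by
  classical
  unfold keepNum
  simp only [Finset.sum_mul, ite_mul, zero_mul]
  rw [sum_swap4]
  refine Finset.sum_congr rfl fun x _ => Finset.sum_congr rfl fun y _ => ?_
  simp [ite_and, Finset.sum_ite_eq]

theorem keepNum_exists (hπpos : ∀ x, 0 < π x) (hPnonneg : ∀ x y, 0 ≤ P x y)
    (S : Finset (Fin d)) (z w : ∀ i : S, 𝒳 i.1) (h : keepNum 𝒳 π P S z w ≠ 0) :
    ∃ x y, restrict 𝒳 S x = z ∧ restrict 𝒳 S y = w ∧ 0 < π x * P x y := by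
  classical
  by_contra hcon
  push_neg at hcon
  apply h
  unfold keepNum
  refine Finset.sum_eq_zero fun x _ => Finset.sum_eq_zero fun y _ => ?_
  by_cases hc : restrict 𝒳 S x = z ∧ restrict 𝒳 S y = w
  · rw [if_pos hc]
    have := hcon x y hc.1 hc.2
    have h2 : 0 ≤ π x * P x y := mul_nonneg (hπpos x).le (hPnonneg x y)
    linarith
  · rw [if_neg hc]

theorem keepNum_sub_pos (hπpos : ∀ x, 0 < π x) (hPnonneg : ∀ x y, 0 ≤ P x y)
    {S T : Finset (Fin d)} (hST : S ⊆ T) (z w : ∀ i : T, 𝒳 i.1)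
    (h : keepNum 𝒳 π P T z w ≠ 0) :
    0 < keepNum 𝒳 π P S (fun j : {i // i ∈ S} => z ⟨j.1, hST j.2⟩)
      (fun j : {i // i ∈ S} => w ⟨j.1, hST j.2⟩) := by
  obtain ⟨x, y, hx, hy, hpos⟩ := keepNum_exists 𝒳 π P hπpos hPnonneg T z w h
  refine Finset.sum_pos' (fun x' _ => Finset.sum_nonneg fun y' _ => ?_) ⟨x, Finset.mem_univ _, ?_⟩
  · split
    · exact mul_nonneg (hπpos x').le (hPnonneg x' y')
    · exact le_rfl
  refine Finset.sum_pos' (fun y' _ => ?_) ⟨y, Finset.mem_univ _, ?_⟩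
  · split
    · exact mul_nonneg (hπpos x).le (hPnonneg x y')
    · exact le_rfl
  have hc : restrict 𝒳 S x = (fun j : {i // i ∈ S} => z ⟨j.1, hST j.2⟩) ∧
      restrict 𝒳 S y = (fun j : {i // i ∈ S} => w ⟨j.1, hST j.2⟩) := by
    constructor
    · funext j; rw [← hx]; rfl
    · funext j; rw [← hy]; rfl
  rw [if_pos hc]
  exact hpos

theorem single_pos_of (hπpos : ∀ x, 0 < π x) (hPnonneg : ∀ x y, 0 ≤ P x y)
    {T : Finset (Fin d)} (z w : ∀ i : T, 𝒳 i.1) (h : keepNum 𝒳 π P T z w ≠ 0)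
    (i : Fin d) (hi : i ∈ T) :
    0 < single 𝒳 π P i (z ⟨i, hi⟩) (w ⟨i, hi⟩) := by
  obtain ⟨x, y, hx, hy, hpos⟩ := keepNum_exists 𝒳 π P hπpos hPnonneg T z w h
  rw [single_eq]
  refine div_pos ?_ (singleMarginal_pos 𝒳 π hπpos i _)
  refine Finset.sum_pos' (fun x' _ => Finset.sum_nonneg fun y' _ => ?_) ⟨x, Finset.mem_univ _, ?_⟩
  · split
    · exact mul_nonneg (hπpos x').le (hPnonneg x' y')
    · exact le_rfl
  refine Finset.sum_pos' (fun y' _ => ?_) ⟨y, Finset.mem_univ _, ?_⟩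
  · split
    · exact mul_nonneg (hπpos x).le (hPnonneg x y')
    · exact le_rfl
  have hc : x i = z ⟨i, hi⟩ ∧ y i = w ⟨i, hi⟩ := by
    constructor
    · rw [← hx]; rfl
    · rw [← hy]; rfl
  rw [if_pos hc]
  exact hpos

theorem indep_insert {S : Finset (Fin d)} {e : Fin d} (heS : e ∉ S)
    (z w : ∀ i : (insert e S : Finset (Fin d)), 𝒳 i.1) :
    indepKernel 𝒳 π P (insert e S) z w =
      indepKernel 𝒳 π P S (fun j => z ⟨j.1, Finset.mem_insert_of_mem j.2⟩)
          (fun j => w ⟨j.1, Finset.mem_insert_of_mem j.2⟩) *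
        single 𝒳 π P e (z ⟨e, Finset.mem_insert_self e S⟩)
          (w ⟨e, Finset.mem_insert_self e S⟩) := by
  classical
  unfold indepKernel
  rw [Finset.univ_eq_attach, Finset.attach_insert, Finset.prod_insert, Finset.univ_eq_attach,
    Finset.prod_image]
  · rw [mul_comm]
  · intro x _ y _ hxy
    have h2 : (x : Fin d) = y :=
      congrArg (Subtype.val : {i // i ∈ insert e S} → Fin d) hxy
    exact Subtype.ext h2
  · simp only [Finset.mem_image, not_exists]
    rintro ⟨a, ha⟩ ⟨_, hcon⟩
    have : a = e := congrArg Subtype.val hcon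
    exact heS (this ▸ ha)

/-- Reassembling an element of `X^(insert e S)` from its parts. -/
def ofPair (S : Finset (Fin d)) (e : Fin d) (u : ∀ i : S, 𝒳 i.1) (a : 𝒳 e) :
    ∀ i : (insert e S : Finset (Fin d)), 𝒳 i.1 :=
  fun i =>
    if h : i.1 ∈ S then u ⟨i.1, h⟩
    else
      cast (congrArg 𝒳 (by
        rcases Finset.mem_insert.1 i.2 with h' | h'
        · exact h'.symm
        · exact absurd h' h)) a

theorem ofPair_self {S : Finset (Fin d)} {e : Fin d} (heS : e ∉ S)
    (u : ∀ i : S, 𝒳 i.1) (a : 𝒳 e) :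
    ofPair 𝒳 S e u a ⟨e, Finset.mem_insert_self e S⟩ = a := by
  unfold ofPair
  rw [dif_neg heS]
  simp

theorem ofPair_mem {S : Finset (Fin d)} {e : Fin d}
    (u : ∀ i : S, 𝒳 i.1) (a : 𝒳 e) (j : Fin d) (hj : j ∈ S) :
    ofPair 𝒳 S e u a ⟨j, Finset.mem_insert_of_mem hj⟩ = u ⟨j, hj⟩ := by
  unfold ofPair
  rw [dif_pos hj]

theorem ofPair_restrict {S : Finset (Fin d)} {e : Fin d}
    (w : ∀ i : (insert e S : Finset (Fin d)), 𝒳 i.1) :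
    ofPair 𝒳 S e (fun j => w ⟨j.1, Finset.mem_insert_of_mem j.2⟩)
      (w ⟨e, Finset.mem_insert_self e S⟩) = w := by
  funext i
  unfold ofPair
  by_cases h : i.1 ∈ S
  · rw [dif_pos h]
  · rw [dif_neg h]
    have hie : i.1 = e := by
      rcases Finset.mem_insert.1 i.2 with h' | h'
      · exact h'
      · exact absurd h' h
    have : i = ⟨e, Finset.mem_insert_self e S⟩ := Subtype.ext hie
    subst this
    rfl

/-- Splitting a sum over `X^(insert e S)` into a product of sums. -/
theorem sum_split {S : Finset (Fin d)} {e : Fin d} (heS : e ∉ S)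
    (f : (∀ i : S, 𝒳 i.1) → ℝ) (g : 𝒳 e → ℝ) :
    ∑ w : ∀ i : (insert e S : Finset (Fin d)), 𝒳 i.1,
        f (fun j => w ⟨j.1, Finset.mem_insert_of_mem j.2⟩) *
          g (w ⟨e, Finset.mem_insert_self e S⟩) =
      (∑ u, f u) * (∑ a, g a) := by
  classical
  rw [Finset.sum_mul_sum, ← Fintype.sum_prod_type']
  refine Fintype.sum_bijective
    (fun w : ∀ i : (insert e S : Finset (Fin d)), 𝒳 i.1 =>
      ((fun j => w ⟨j.1, Finset.mem_insert_of_mem j.2⟩, w ⟨e, Finset.mem_insert_self e S⟩) :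
        (∀ i : S, 𝒳 i.1) × 𝒳 e))
    ?_ _ _ (fun w => rfl)
  constructor
  · intro w w' hww'
    have h1 := congrArg Prod.fst hww'
    have h2 := congrArg Prod.snd hww'
    dsimp at h1 h2
    rw [← ofPair_restrict 𝒳 w, ← ofPair_restrict 𝒳 w', h1, h2]
  · rintro ⟨u, a⟩
    refine ⟨ofPair 𝒳 S e u a, ?_⟩
    dsimp only
    exact Prod.ext (funext fun j => ofPair_mem 𝒳 u a j.1 j.2) (ofPair_self 𝒳 heS u a)

/-- Nonnegativity of the KL divergence rate. -/
theorem klRate_nonneg {Y : Type*} [Fintype Y] (μ : Y → ℝ) (M L : Y → Y → ℝ)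
    (hμ : ∀ x, 0 ≤ μ x) (hM : ∀ x y, 0 ≤ M x y) (hL : ∀ x y, 0 ≤ L x y)
    (hMrow : ∀ x, ∑ y, M x y = 1) (hLrow : ∀ x, ∑ y, L x y ≤ 1)
    (hML : ∀ x y, M x y ≠ 0 → L x y ≠ 0) :
    0 ≤ klRate μ M L := by
  unfold klRate
  have key : ∀ x, ∑ y, M x y * Real.log (M x y / L x y) ≥ ∑ y, (M x y - L x y) := by
    intro x
    refine Finset.sum_le_sum fun y _ => ?_
    by_cases hM0 : M x y = 0
    · rw [hM0]
      simp
      exact hL x y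
    · have hMpos : 0 < M x y := lt_of_le_of_ne (hM x y) (Ne.symm hM0)
      have hLpos : 0 < L x y := lt_of_le_of_ne (hL x y) (Ne.symm (hML x y hM0))
      have hlog : Real.log (L x y / M x y) ≤ L x y / M x y - 1 :=
        Real.log_le_sub_one_of_pos (div_pos hLpos hMpos)
      have hrw : Real.log (M x y / L x y) = - Real.log (L x y / M x y) := by
        rw [← Real.log_inv, inv_div]
      rw [hrw]
      have := mul_le_mul_of_nonneg_left hlog hMpos.le
      rw [mul_sub, mul_one, mul_div_cancel₀ _ hM0] at this
      nlinarith
  have key2 : ∀ x, 0 ≤ ∑ y, M x y * Real.log (M x y / L x y) := by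
    intro x
    have h1 : ∑ y, (M x y - L x y) = 1 - ∑ y, L x y := by
      rw [Finset.sum_sub_distrib, hMrow]
    have := key x
    rw [h1] at this
    have := hLrow x
    linarith
  calc (0:ℝ) = ∑ x : Y, (0:ℝ) := by simp
    _ ≤ ∑ x, ∑ y, μ x * M x y * Real.log (M x y / L x y) := by
        refine Finset.sum_le_sum fun x _ => ?_
        have : ∑ y, μ x * M x y * Real.log (M x y / L x y) =
            μ x * ∑ y, M x y * Real.log (M x y / L x y) := by
          rw [Finset.mul_sum]
          exact Finset.sum_congr rfl fun y _ => by ring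
        rw [this]
        exact mul_nonneg (hμ x) (key2 x)

/-- Chain rule: `𝕀(P^(S ∪ {e})) = 𝕀(P^(S)) + D(P^(S ∪ {e}) ‖ P^(S) ⊗ P^(e))`. -/
theorem chain_rule (hπpos : ∀ x, 0 < π x) (hPnonneg : ∀ x y, 0 ≤ P x y)
    {S : Finset (Fin d)} {e : Fin d} (heS : e ∉ S) :
    distToIndep 𝒳 π P (insert e S) = distToIndep 𝒳 π P S + dSplit 𝒳 π P S e := by
  classical
  have hsub : S ⊆ insert e S := Finset.subset_insert e S
  set g : (∀ i : S, 𝒳 i.1) → (∀ i : S, 𝒳 i.1) → ℝ := fun z w =>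
    if keepIn 𝒳 π P S z w = 0 then 0
    else Real.log (keepIn 𝒳 π P S z w / indepKernel 𝒳 π P S z w) with hgdef
  have hgS : distToIndep 𝒳 π P S = ∑ z, ∑ w, keepNum 𝒳 π P S z w * g z w := by
    unfold distToIndep klRate
    refine Finset.sum_congr rfl fun z _ => Finset.sum_congr rfl fun w _ => ?_
    by_cases h : keepIn 𝒳 π P S z w = 0
    · have hnum : keepNum 𝒳 π P S z w = marginal 𝒳 π S z * keepIn 𝒳 π P S z w :=
        (mul_keepIn 𝒳 π P hπpos S z w).symm
      rw [h] at hnum ⊢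
      rw [hnum]
      simp
    · rw [hgdef]
      simp only
      rw [if_neg h, ← mul_keepIn 𝒳 π P hπpos S z w]
  have hmain : distToIndep 𝒳 π P (insert e S) - dSplit 𝒳 π P S e =
      ∑ z, ∑ w, keepNum 𝒳 π P (insert e S) z w *
        g (fun j => z ⟨j.1, Finset.mem_insert_of_mem j.2⟩)
          (fun j => w ⟨j.1, Finset.mem_insert_of_mem j.2⟩) := by
    unfold distToIndep dSplit klRate
    rw [← Finset.sum_sub_distrib]
    refine Finset.sum_congr rfl fun z _ => ?_
    rw [← Finset.sum_sub_distrib]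
    refine Finset.sum_congr rfl fun w _ => ?_
    by_cases h0 : keepNum 𝒳 π P (insert e S) z w = 0
    · have hM0 : keepIn 𝒳 π P (insert e S) z w = 0 := by
        rw [keepIn_eq, h0, zero_div]
      rw [h0, hM0]
      ring
    · have hnum : 0 < keepNum 𝒳 π P (insert e S) z w :=
        (keepNum_nonneg 𝒳 π P hπpos hPnonneg _ z w).lt_of_ne (Ne.symm h0)
      have hM : 0 < keepIn 𝒳 π P (insert e S) z w := by
        rw [keepIn_eq]
        exact div_pos hnum (marginal_pos 𝒳 π hπpos _ z)
      have hMS : 0 < keepIn 𝒳 π P S (fun j => z ⟨j.1, Finset.mem_insert_of_mem j.2⟩)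
          (fun j => w ⟨j.1, Finset.mem_insert_of_mem j.2⟩) := by
        rw [keepIn_eq]
        exact div_pos (keepNum_sub_pos 𝒳 π P hπpos hPnonneg hsub z w h0)
          (marginal_pos 𝒳 π hπpos _ _)
      have hse : 0 < single 𝒳 π P e (z ⟨e, Finset.mem_insert_self e S⟩)
          (w ⟨e, Finset.mem_insert_self e S⟩) :=
        single_pos_of 𝒳 π P hπpos hPnonneg z w h0 e (Finset.mem_insert_self e S)
      have hsplit : 0 < splitKernel 𝒳 π P S e z w := mul_pos hMS hse
      have hindS : 0 < indepKernel 𝒳 π P S (fun j => z ⟨j.1, Finset.mem_insert_of_mem j.2⟩)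
          (fun j => w ⟨j.1, Finset.mem_insert_of_mem j.2⟩) := by
        refine Finset.prod_pos fun i _ => ?_
        exact single_pos_of 𝒳 π P hπpos hPnonneg z w h0 i.1
          (Finset.mem_insert_of_mem i.2)
      have hindT : 0 < indepKernel 𝒳 π P (insert e S) z w := by
        rw [indep_insert 𝒳 π P heS]
        exact mul_pos hindS hse
      have hg : g (fun j => z ⟨j.1, Finset.mem_insert_of_mem j.2⟩)
          (fun j => w ⟨j.1, Finset.mem_insert_of_mem j.2⟩) =
          Real.log (keepIn 𝒳 π P S (fun j => z ⟨j.1, Finset.mem_insert_of_mem j.2⟩)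
              (fun j => w ⟨j.1, Finset.mem_insert_of_mem j.2⟩) /
            indepKernel 𝒳 π P S (fun j => z ⟨j.1, Finset.mem_insert_of_mem j.2⟩)
              (fun j => w ⟨j.1, Finset.mem_insert_of_mem j.2⟩)) := by
        rw [hgdef]
        simp only
        rw [if_neg hMS.ne']
      have hlog : Real.log (keepIn 𝒳 π P (insert e S) z w /
              indepKernel 𝒳 π P (insert e S) z w) -
            Real.log (keepIn 𝒳 π P (insert e S) z w / splitKernel 𝒳 π P S e z w) =
          Real.log (keepIn 𝒳 π P S (fun j => z ⟨j.1, Finset.mem_insert_of_mem j.2⟩)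
              (fun j => w ⟨j.1, Finset.mem_insert_of_mem j.2⟩) /
            indepKernel 𝒳 π P S (fun j => z ⟨j.1, Finset.mem_insert_of_mem j.2⟩)
              (fun j => w ⟨j.1, Finset.mem_insert_of_mem j.2⟩)) := by
        rw [Real.log_div hM.ne' hindT.ne', Real.log_div hM.ne' hsplit.ne',
          Real.log_div hMS.ne' hindS.ne', indep_insert 𝒳 π P heS,
          show splitKernel 𝒳 π P S e z w = _ * _ from rfl,
          Real.log_mul hindS.ne' hse.ne', Real.log_mul hMS.ne' hse.ne']
        ring
      calc marginal 𝒳 π (insert e S) z * keepIn 𝒳 π P (insert e S) z w *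
              Real.log (keepIn 𝒳 π P (insert e S) z w /
                indepKernel 𝒳 π P (insert e S) z w) -
            marginal 𝒳 π (insert e S) z * keepIn 𝒳 π P (insert e S) z w *
              Real.log (keepIn 𝒳 π P (insert e S) z w / splitKernel 𝒳 π P S e z w)
          = (marginal 𝒳 π (insert e S) z * keepIn 𝒳 π P (insert e S) z w) *
              (Real.log (keepIn 𝒳 π P (insert e S) z w /
                  indepKernel 𝒳 π P (insert e S) z w) -
                Real.log (keepIn 𝒳 π P (insert e S) z w / splitKernel 𝒳 π P S e z w)) := by
            ring
        _ = _ := by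
            rw [mul_keepIn 𝒳 π P hπpos, hlog, hg]
  have htrans : (∑ z, ∑ w, keepNum 𝒳 π P (insert e S) z w *
        g (fun j => z ⟨j.1, Finset.mem_insert_of_mem j.2⟩)
          (fun j => w ⟨j.1, Finset.mem_insert_of_mem j.2⟩)) =
      ∑ z, ∑ w, keepNum 𝒳 π P S z w * g z w := by
    rw [transfer 𝒳 π P (insert e S) (fun z w =>
      g (fun j => z ⟨j.1, Finset.mem_insert_of_mem j.2⟩)
        (fun j => w ⟨j.1, Finset.mem_insert_of_mem j.2⟩)), transfer 𝒳 π P S g]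
    rfl
  rw [hgS]
  linarith [hmain, htrans]

theorem splitKernel_row (hπpos : ∀ x, 0 < π x) (hProw : ∀ x, ∑ y, P x y = 1)
    {S : Finset (Fin d)} {e : Fin d} (heS : e ∉ S)
    (z : ∀ i : (insert e S : Finset (Fin d)), 𝒳 i.1) :
    ∑ w, splitKernel 𝒳 π P S e z w = 1 := by
  rw [show (∑ w, splitKernel 𝒳 π P S e z w) =
      (∑ u, keepIn 𝒳 π P S (fun j => z ⟨j.1, Finset.mem_insert_of_mem j.2⟩) u) *
        (∑ a, single 𝒳 π P e (z ⟨e, Finset.mem_insert_self e S⟩) a) from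
    sum_split 𝒳 heS _ _]
  rw [keepIn_row 𝒳 π P hπpos hProw, single_row 𝒳 π P hπpos hProw, one_mul]

theorem dSplit_nonneg (hπpos : ∀ x, 0 < π x) (hPnonneg : ∀ x y, 0 ≤ P x y)
    (hProw : ∀ x, ∑ y, P x y = 1) {S : Finset (Fin d)} {e : Fin d} (heS : e ∉ S) :
    0 ≤ dSplit 𝒳 π P S e := by
  unfold dSplit
  refine klRate_nonneg _ _ _ (fun z => (marginal_pos 𝒳 π hπpos _ z).le)
    (fun z w => keepIn_nonneg 𝒳 π P hπpos hPnonneg _ z w)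
    (fun z w => mul_nonneg (keepIn_nonneg 𝒳 π P hπpos hPnonneg _ _ _)
      (single_nonneg 𝒳 π P hπpos hPnonneg _ _ _))
    (fun z => keepIn_row 𝒳 π P hπpos hProw _ z)
    (fun z => le_of_eq (splitKernel_row 𝒳 π P hπpos hProw heS z)) ?_
  intro z w hMne
  have h0 : keepNum 𝒳 π P (insert e S) z w ≠ 0 := by
    intro hc
    exact hMne (by rw [keepIn_eq, hc, zero_div])
  have hMS : 0 < keepIn 𝒳 π P S (fun j => z ⟨j.1, Finset.mem_insert_of_mem j.2⟩)
      (fun j => w ⟨j.1, Finset.mem_insert_of_mem j.2⟩) := by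
    rw [keepIn_eq]
    exact div_pos (keepNum_sub_pos 𝒳 π P hπpos hPnonneg (Finset.subset_insert e S) z w h0)
      (marginal_pos 𝒳 π hπpos _ _)
  have hse : 0 < single 𝒳 π P e (z ⟨e, Finset.mem_insert_self e S⟩)
      (w ⟨e, Finset.mem_insert_self e S⟩) :=
    single_pos_of 𝒳 π P hπpos hPnonneg z w h0 e (Finset.mem_insert_self e S)
  exact (mul_pos hMS hse).ne'

end Helpers

/-- The map `f(𝐒) = 𝕀(⊗_{i=1}^k P^(S_i)) = Σ_{i=1}^k 𝕀(P^(S_i))` is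
pairwise monotonically non-decreasing: for `e ∉ supp 𝐒` and `i ≠ j`,
`Δ_{e,i} f(𝐒) + Δ_{e,j} f(𝐒)
  = D(P^(S_i ∪ {e}) ‖ P^(S_i) ⊗ P^(e)) + D(P^(S_j ∪ {e}) ‖ P^(S_j) ⊗ P^(e)) ≥ 0`. -/
theorem distToIndep_sum_pairwise_monotone
    (𝒳 : Fin d → Type) [∀ i, Fintype (𝒳 i)] [∀ i, Nonempty (𝒳 i)]
    (π : (∀ i, 𝒳 i) → ℝ) (P : (∀ i, 𝒳 i) → (∀ i, 𝒳 i) → ℝ)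
    (hπpos : ∀ x, 0 < π x) (hπsum : ∑ x, π x = 1)
    (hPnonneg : ∀ x y, 0 ≤ P x y) (hProw : ∀ x, ∑ y, P x y = 1)
    (hstat : ∀ y, ∑ x, π x * P x y = π y)
    (k : ℕ) (S : Fin k → Finset (Fin d)) (hS : PwDisj S)
    (e : Fin d) (he : e ∉ Finset.univ.biUnion S)
    (i j : Fin k) (hij : i ≠ j) :
    ((∑ l, distToIndep 𝒳 π P (Function.update S i (insert e (S i)) l)) -
          (∑ l, distToIndep 𝒳 π P (S l)) +
        ((∑ l, distToIndep 𝒳 π P (Function.update S j (insert e (S j)) l)) -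
          (∑ l, distToIndep 𝒳 π P (S l))) =
      dSplit 𝒳 π P (S i) e + dSplit 𝒳 π P (S j) e) ∧
    0 ≤ (∑ l, distToIndep 𝒳 π P (Function.update S i (insert e (S i)) l)) -
          (∑ l, distToIndep 𝒳 π P (S l)) +
        ((∑ l, distToIndep 𝒳 π P (Function.update S j (insert e (S j)) l)) -
          (∑ l, distToIndep 𝒳 π P (S l))) := by
  classical
  have heI : ∀ l, e ∉ S l := fun l hl =>
    he (Finset.mem_biUnion.2 ⟨l, Finset.mem_univ l, hl⟩)
  have hupdate : ∀ (A : Finset (Fin d)) (m : Fin k),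
      (∑ l, distToIndep 𝒳 π P (Function.update S m A l)) -
        ∑ l, distToIndep 𝒳 π P (S l) =
      distToIndep 𝒳 π P A - distToIndep 𝒳 π P (S m) := by
    intro A m
    have hfun : (fun l => distToIndep 𝒳 π P (Function.update S m A l)) =
        Function.update (fun l => distToIndep 𝒳 π P (S l)) m (distToIndep 𝒳 π P A) := by
      funext l
      by_cases h : l = m
      · subst h; simp
      · simp [Function.update_of_ne h]
    rw [hfun, Finset.sum_update_of_mem (Finset.mem_univ m)]
    have h2 : ∑ l, distToIndep 𝒳 π P (S l) =
        distToIndep 𝒳 π P (S m) +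
          ∑ l ∈ Finset.univ.erase m, distToIndep 𝒳 π P (S l) :=
      (Finset.add_sum_erase _ _ (Finset.mem_univ m)).symm
    rw [h2, ← Finset.sdiff_singleton_eq_erase]
    ring
  have hchain : ∀ m : Fin k,
      distToIndep 𝒳 π P (insert e (S m)) - distToIndep 𝒳 π P (S m) =
        dSplit 𝒳 π P (S m) e := by
    intro m
    rw [chain_rule 𝒳 π P hπpos hPnonneg (heI m)]
    ring
  constructor
  · rw [hupdate (insert e (S i)) i, hupdate (insert e (S j)) j, hchain i, hchain j]
  · rw [hupdate (insert e (S i)) i, hupdate (insert e (S j)) j, hchain i, hchain j]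
    exact add_nonneg (dSplit_nonneg 𝒳 π P hπpos hPnonneg hProw (heI i))
      (dSplit_nonneg 𝒳 π P hπpos hPnonneg hProw (heI j))

end
end
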